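/- arXiv:1704.02034 — 9 statements merged into one kernel-verified Lean document; each statement's English description precedes it below -/
import Mathlib

section
/- Let Λ ∈ ℝ[X₁,…,Xₙ]* with Λ(p²) ≥ 0 for all p ∈ ℝ[X]. Then the ideal U_Λ = { p : Λ(p²) = 0 } is a radical ideal, i.e. g² ∈ U_Λ implies g ∈ U_Λ for all g ∈ ℝ[X]. -/
/-- For a linear form `Λ` on `ℝ[X₁,…,Xₙ]` nonnegative on squares, the GNS kernel
`U_Λ = {p | Λ(p²) = 0}` is radical: `g² ∈ U_Λ` implies `g ∈ U_Λ` for all `g ∈ ℝ[X]`. -/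
theorem GNS_kernel_radical {n : ℕ} (Λ : MvPolynomial (Fin n) ℝ →ₗ[ℝ] ℝ)
    (hΛ : ∀ p : MvPolynomial (Fin n) ℝ, 0 ≤ Λ (p ^ 2)) :
    ∀ g : MvPolynomial (Fin n) ℝ, Λ ((g ^ 2) ^ 2) = 0 → Λ (g ^ 2) = 0 := by
  intro g h4
  have hA0 : 0 ≤ Λ (g ^ 2) := hΛ g
  have hC0 : 0 ≤ Λ 1 := by simpa using hΛ 1
  obtain ⟨A, hA⟩ : ∃ A, Λ (g ^ 2) = A := ⟨_, rfl⟩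
  obtain ⟨Cc, hC⟩ : ∃ Cc, Λ 1 = Cc := ⟨_, rfl⟩
  rw [hA] at hA0 ⊢
  rw [hC] at hC0
  set t : ℝ := -A / (Cc + 1) with ht
  have hexp : (g ^ 2 + MvPolynomial.C t) ^ 2
      = (g ^ 2) ^ 2 + (2 * t) • (g ^ 2) + t ^ 2 • (1 : MvPolynomial (Fin n) ℝ) := by
    rw [MvPolynomial.smul_eq_C_mul, MvPolynomial.smul_eq_C_mul]
    simp only [map_mul, map_pow, map_ofNat]
    ring
  have key := hΛ (g ^ 2 + MvPolynomial.C t)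
  rw [hexp] at key
  simp only [map_add, map_smul, h4, smul_eq_mul, zero_add, hA, hC] at key
  rw [ht] at key
  have hCpos : (0:ℝ) < Cc + 1 := by linarith
  have hne : (Cc + 1) ≠ 0 := ne_of_gt hCpos
  have key' : 0 ≤ (2 * (-A / (Cc + 1)) * A + (-A / (Cc + 1)) ^ 2 * Cc) * (Cc + 1) ^ 2 :=
    mul_nonneg key (by positivity)
  have heq : (2 * (-A / (Cc + 1)) * A + (-A / (Cc + 1)) ^ 2 * Cc) * (Cc + 1) ^ 2
      = -2 * A ^ 2 * (Cc + 1) + A ^ 2 * Cc := by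
    field_simp
  rw [heq] at key'
  nlinarith [sq_nonneg A]
end

section
/- Let Λ = Σᵢ₌₁^N λᵢ ev_{aᵢ} ∈ ℝ[X₁,…,Xₙ]* with λᵢ > 0 and a₁,…,a_N ∈ ℝⁿ. Then dim(ℝ[X]/U_Λ) = |{a₁,…,a_N}|, where U_Λ = { p : Λ(p²) = 0 }. -/
open MvPolynomial

/-- Separation: for distinct points there is a polynomial taking value 1 at one and 0 at the
other. -/
lemma GNS_sep {n : ℕ} (x y : Fin n → ℝ) (h : x ≠ y) :
    ∃ p : MvPolynomial (Fin n) ℝ, eval x p = 1 ∧ eval y p = 0 := by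
  obtain ⟨j, hj⟩ := Function.ne_iff.mp h
  refine ⟨C (x j - y j)⁻¹ * (X j - C (y j)), ?_, ?_⟩
  · simp [inv_mul_cancel₀ (sub_ne_zero.mpr hj)]
  · simp

/-- Indicator polynomial on a finite set. -/
lemma GNS_indic {n : ℕ} (S : Finset (Fin n → ℝ)) (s : Fin n → ℝ) :
    ∃ p : MvPolynomial (Fin n) ℝ, eval s p = 1 ∧ ∀ t ∈ S, t ≠ s → eval t p = 0 := by
  classical
  have hsep : ∀ t : Fin n → ℝ, t ≠ s → ∃ p : MvPolynomial (Fin n) ℝ,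
      eval s p = 1 ∧ eval t p = 0 := fun t ht => GNS_sep s t (Ne.symm ht)
  choose q hq1 hq0 using hsep
  set Q : (Fin n → ℝ) → MvPolynomial (Fin n) ℝ :=
    fun t => if h : t ≠ s then q t h else 1 with hQ
  refine ⟨∏ t ∈ S.erase s, Q t, ?_, ?_⟩
  · rw [map_prod]
    apply Finset.prod_eq_one
    intro t ht
    have h := (Finset.mem_erase.mp ht).1
    simp [hQ, h, hq1]
  · intro t ht hts
    rw [map_prod]
    apply Finset.prod_eq_zero (Finset.mem_erase.mpr ⟨hts, ht⟩)
    simp [hQ, hts, hq0]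

/-- For `Λ = Σ λᵢ ev_{aᵢ}` with `λᵢ > 0`, the quotient `ℝ[X]/U_Λ` by the GNS kernel
`U_Λ = {p | Λ(p²) = 0}` has dimension equal to the number of distinct points among
`a₁,…,a_N`. -/
theorem finrank_quotient_GNS_kernel {n N : ℕ}
    (a : Fin N → (Fin n → ℝ)) (lam : Fin N → ℝ) (hlam : ∀ i, 0 < lam i)
    (Λ : MvPolynomial (Fin n) ℝ →ₗ[ℝ] ℝ)
    (hΛ : ∀ p : MvPolynomial (Fin n) ℝ, Λ p = ∑ i, lam i * MvPolynomial.eval (a i) p)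
    (U : Submodule ℝ (MvPolynomial (Fin n) ℝ))
    (hU : ∀ p : MvPolynomial (Fin n) ℝ, p ∈ U ↔ Λ (p ^ 2) = 0) :
    Module.finrank ℝ (MvPolynomial (Fin n) ℝ ⧸ U) = (Finset.univ.image a).card := by
  classical
  set S : Finset (Fin n → ℝ) := Finset.univ.image a with hS
  -- evaluation linear map
  let L : MvPolynomial (Fin n) ℝ →ₗ[ℝ] ({x // x ∈ S} → ℝ) :=
    { toFun := fun p x => eval x.1 p
      map_add' := by intro p q; funext x; simp
      map_smul' := by intro c p; funext x; simp }
  have hLval : ∀ (p : MvPolynomial (Fin n) ℝ) (x : {x // x ∈ S}), L p x = eval x.1 p := fun _ _ => rfl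
  -- U is the kernel of L
  have hker : LinearMap.ker L = U := by
    ext p
    rw [LinearMap.mem_ker, hU, hΛ, _root_.funext_iff]
    have hterm : ∀ i : Fin N, lam i * eval (a i) (p ^ 2) = lam i * (eval (a i) p) ^ 2 := by
      intro i; rw [map_pow]
    constructor
    · intro h
      have h2 : ∀ i, eval (a i) p = 0 := by
        intro i
        have := h ⟨a i, Finset.mem_image_of_mem a (Finset.mem_univ i)⟩
        simpa [hLval] using this
      simp [hterm, h2]
    · intro h x
      have hnn : ∀ i ∈ Finset.univ, (0:ℝ) ≤ lam i * (eval (a i) p) ^ 2 :=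
        fun i _ => mul_nonneg (hlam i).le (sq_nonneg _)
      have h0 : ∀ i : Fin N, lam i * (eval (a i) p) ^ 2 = 0 := by
        intro i
        have := (Finset.sum_eq_zero_iff_of_nonneg hnn).mp (by
          rw [← h]; exact (Finset.sum_congr rfl fun i _ => (hterm i).symm)) i (Finset.mem_univ i)
        exact this
      have heval : ∀ i : Fin N, eval (a i) p = 0 := by
        intro i
        have := h0 i
        have := (mul_eq_zero.mp this).resolve_left (hlam i).ne'
        exact pow_eq_zero_iff (n := 2) (by norm_num) |>.mp this
      obtain ⟨i, -, hi⟩ := Finset.mem_image.mp x.2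
      rw [hLval]
      rw [← hi]
      exact heval i
  -- L is surjective by interpolation
  have hsurj : Function.Surjective L := by
    intro f
    choose q hq1 hq0 using fun s : {x // x ∈ S} => GNS_indic S s.1
    refine ⟨∑ s : {x // x ∈ S}, C (f s) * q s, ?_⟩
    funext u
    rw [hLval, map_sum]
    rw [Finset.sum_eq_single u]
    · simp [hq1]
    · intro b _ hb
      have hne : (u.1 : Fin n → ℝ) ≠ b.1 := fun h => hb (Subtype.ext h.symm)
      simp [hq0 b u.1 u.2 hne]
    · intro h; exact absurd (Finset.mem_univ _) h
  have e := L.quotKerEquivOfSurjective hsurj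
  rw [hker] at e
  rw [e.finrank_eq, Module.finrank_fintype_fun_eq_card, Fintype.card_coe]
end

section
/- Let f, p₁,…,p_m ∈ ℝ[X]_k define a polynomial optimization problem with feasible set S and optimal value P*. Suppose L ∈ ℝ[X]_k* satisfies L(1) = 1, L is bounded below on feasible solutions by P_k* ≤ P*, L(f) = P_k*, and L has a quadrature rule L(p) = Σᵢ₌₁^N λᵢ p(aᵢ) for all p ∈ ℝ[X]_l (some l ≤ k with f ∈ ℝ[X]_l), with all nodes aᵢ ∈ S and weights λᵢ > 0. Then L(f) = P* and every node aᵢ is a global minimizer of f on S, i.e. f(aᵢ) = P* for all i. -/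
/-- If an optimal solution `L` of the degree-`k` moment relaxation (`L(1) = 1`,
`L(f) = P_k* ≤ P*`) has a quadrature rule on `ℝ[X]_l` (with `f ∈ ℝ[X]_l`, `l ≤ k`) whose
nodes lie in `S`, then `L(f) = P*` and every node is a global minimizer of `f` on `S`. -/
theorem quadrature_optimality {n m k l N : ℕ} (hl : l ≤ k)
    (f : MvPolynomial (Fin n) ℝ) (hfk : f.totalDegree ≤ k) (hfl : f.totalDegree ≤ l)
    (p : Fin m → MvPolynomial (Fin n) ℝ)
    (S : Set (Fin n → ℝ)) (hS : S = {x | ∀ i, 0 ≤ MvPolynomial.eval x (p i)})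
    (Pstar : ℝ) (hPstar : IsGLB ((fun x => MvPolynomial.eval x f) '' S) Pstar)
    (Pk : ℝ) (hPk : Pk ≤ Pstar)
    (L : MvPolynomial (Fin n) ℝ →ₗ[ℝ] ℝ) (hL1 : L 1 = 1) (hLf : L f = Pk)
    (a : Fin N → (Fin n → ℝ)) (ha : ∀ i, a i ∈ S)
    (lam : Fin N → ℝ) (hlam : ∀ i, 0 < lam i)
    (hq : ∀ g : MvPolynomial (Fin n) ℝ, g.totalDegree ≤ l →
      L g = ∑ i, lam i * MvPolynomial.eval (a i) g) :
    L f = Pstar ∧ ∀ i, MvPolynomial.eval (a i) f = Pstar := by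
  have hlow : ∀ i, Pstar ≤ MvPolynomial.eval (a i) f := fun i =>
    hPstar.1 ⟨a i, ha i, rfl⟩
  have hsum : (∑ i, lam i) = 1 := by
    have := hq 1 (by simp [MvPolynomial.totalDegree_one])
    simpa [hL1] using this.symm
  have hLfsum : L f = ∑ i, lam i * MvPolynomial.eval (a i) f := hq f hfl
  have hge : Pstar ≤ L f := by
    calc Pstar = ∑ i, lam i * Pstar := by rw [← Finset.sum_mul, hsum, one_mul]
      _ ≤ ∑ i, lam i * MvPolynomial.eval (a i) f :=
        Finset.sum_le_sum fun i _ =>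
          mul_le_mul_of_nonneg_left (hlow i) (hlam i).le
      _ = L f := hLfsum.symm
  have hLP : L f = Pstar := le_antisymm (hLf ▸ hPk) hge
  refine ⟨hLP, fun i => ?_⟩
  have hzero : ∑ j, lam j * (MvPolynomial.eval (a j) f - Pstar) = 0 := by
    have : ∑ j, lam j * (MvPolynomial.eval (a j) f - Pstar)
        = (∑ j, lam j * MvPolynomial.eval (a j) f) - (∑ j, lam j) * Pstar := by
      rw [Finset.sum_mul, ← Finset.sum_sub_distrib]
      congr 1; ext j; ring
    rw [this, hsum, one_mul, ← hLfsum, hLP, sub_self]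
  have hterm : ∀ j ∈ Finset.univ, lam j * (MvPolynomial.eval (a j) f - Pstar) = 0 := by
    apply (Finset.sum_eq_zero_iff_of_nonneg ?_).mp hzero
    exact fun j _ => mul_nonneg (hlam j).le (sub_nonneg.mpr (hlow j))
  have := hterm i (Finset.mem_univ i)
  rcases mul_eq_zero.mp this with h | h
  · exact absurd h (hlam i).ne'
  · linarith [sub_eq_zero.mp h]
end

section
/- Let L ∈ ℝ[X₁,…,Xₙ]_{2d+2}* be nonnegative on squares, and suppose L has a quadrature rule on ℝ[X]_{2d+1} with N pairwise distinct nodes. Then N ≥ dim(T_L), where T_L = { p mod U_L : p ∈ ℝ[X]_d } ⊆ ℝ[X]_{d+1}/U_L is the GNS truncation of L. -/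
open MvPolynomial

private lemma finrank_range_le_of_ker_eq {N : ℕ} {A B : Type*}
    [AddCommGroup A] [Module ℝ A] [AddCommGroup B] [Module ℝ B]
    (F : A →ₗ[ℝ] B) (g : A →ₗ[ℝ] (Fin N → ℝ)) (S : Submodule ℝ B)
    (hS : S = LinearMap.range F)
    (h : LinearMap.ker F = LinearMap.ker g) :
    Module.finrank ℝ ↥S ≤ N := by
  subst hS
  calc Module.finrank ℝ ↥(LinearMap.range F)
      = Module.finrank ℝ (A ⧸ LinearMap.ker F) :=
        (LinearMap.quotKerEquivRange F).symm.finrank_eq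
    _ = Module.finrank ℝ (A ⧸ LinearMap.ker g) := by rw [h]
    _ = Module.finrank ℝ ↥(LinearMap.range g) := (LinearMap.quotKerEquivRange g).finrank_eq
    _ ≤ Module.finrank ℝ (Fin N → ℝ) := Submodule.finrank_le _
    _ = N := Module.finrank_fin_fun ℝ


set_option maxHeartbeats 1600000 in
set_option synthInstance.maxHeartbeats 800000 in
/-- If `L ∈ ℝ[X]_{2d+2}*` is nonnegative on squares and has a quadrature rule on
`ℝ[X]_{2d+1}` with `N` pairwise distinct nodes, then `N ≥ dim T_L`, where `T_L` is the GNS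
truncation of `L` (the image of `ℝ[X]_d` in `ℝ[X]_{d+1}/U_L`). -/
theorem nodes_ge_dim_truncation {n d N : ℕ}
    (L : MvPolynomial (Fin n) ℝ →ₗ[ℝ] ℝ)
    (hL : ∀ p : MvPolynomial (Fin n) ℝ, p.totalDegree ≤ d + 1 → 0 ≤ L (p ^ 2))
    (U : Submodule ℝ ↥(restrictTotalDegree (Fin n) ℝ (d + 1)))
    (hU : ∀ p : ↥(restrictTotalDegree (Fin n) ℝ (d + 1)),
      p ∈ U ↔ L ((p : MvPolynomial (Fin n) ℝ) ^ 2) = 0)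
    (a : Fin N → (Fin n → ℝ)) (ha : Function.Injective a)
    (lam : Fin N → ℝ) (hlam : ∀ i, 0 < lam i)
    (hq : ∀ g : MvPolynomial (Fin n) ℝ, g.totalDegree ≤ 2 * d + 1 →
      L g = ∑ i, lam i * MvPolynomial.eval (a i) g) :
    Module.finrank ℝ
      ↥(Submodule.map U.mkQ
        (Submodule.comap (restrictTotalDegree (Fin n) ℝ (d + 1)).subtype
          (restrictTotalDegree (Fin n) ℝ d))) ≤ N := by
  have key : ∀ p : ↥(Submodule.comap (restrictTotalDegree (Fin n) ℝ (d + 1)).subtype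
      (restrictTotalDegree (Fin n) ℝ d)),
      L ((((p : ↥(restrictTotalDegree (Fin n) ℝ (d + 1))) : MvPolynomial (Fin n) ℝ)) ^ 2) = 0 ↔
      ∀ i, eval (a i) (((p : ↥(restrictTotalDegree (Fin n) ℝ (d + 1))) : MvPolynomial (Fin n) ℝ)) = 0 := by
    intro p
    have hdeg : (((p : ↥(restrictTotalDegree (Fin n) ℝ (d + 1))) :
        MvPolynomial (Fin n) ℝ)).totalDegree ≤ d :=
      (mem_restrictTotalDegree _ _ _).mp (Submodule.mem_comap.mp p.2)
    have hdd : ((((p : ↥(restrictTotalDegree (Fin n) ℝ (d + 1))) :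
        MvPolynomial (Fin n) ℝ)) ^ 2).totalDegree ≤ 2 * d + 1 :=
      le_trans (le_trans (totalDegree_pow _ _) (Nat.mul_le_mul_left _ hdeg)) (Nat.le_succ _)
    rw [hq _ hdd]
    have hrw : ∀ i : Fin N, eval (a i) ((((p : ↥(restrictTotalDegree (Fin n) ℝ (d + 1))) :
        MvPolynomial (Fin n) ℝ)) ^ 2) = (eval (a i) (((p : ↥(restrictTotalDegree (Fin n) ℝ (d + 1))) :
        MvPolynomial (Fin n) ℝ))) ^ 2 := fun i => map_pow _ _ _
    simp only [hrw]
    rw [Finset.sum_eq_zero_iff_of_nonneg (fun i _ => mul_nonneg (hlam i).le (sq_nonneg _))]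
    constructor
    · intro h i
      rcases mul_eq_zero.mp (h i (Finset.mem_univ i)) with h'' | h''
      · exact absurd h'' (hlam i).ne'
      · exact pow_eq_zero_iff (by norm_num : (2:ℕ) ≠ 0) |>.mp h''
    · intro h i _
      rw [h i]; ring
  have hker : LinearMap.ker (U.mkQ ∘ₗ (Submodule.comap
        (restrictTotalDegree (Fin n) ℝ (d + 1)).subtype
        (restrictTotalDegree (Fin n) ℝ d)).subtype)
      = LinearMap.ker (LinearMap.pi (fun i : Fin N =>
        (aeval (a i)).toLinearMap ∘ₗ (restrictTotalDegree (Fin n) ℝ (d + 1)).subtype ∘ₗ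
        (Submodule.comap (restrictTotalDegree (Fin n) ℝ (d + 1)).subtype
          (restrictTotalDegree (Fin n) ℝ d)).subtype)) := by
    ext p
    rw [LinearMap.mem_ker, LinearMap.mem_ker]
    have hFp : (U.mkQ ∘ₗ _root_.Submodule.subtype _) p = 0 ↔
        (p : ↥(restrictTotalDegree (Fin n) ℝ (d + 1))) ∈ U := by
      rw [LinearMap.comp_apply, Submodule.subtype_apply, Submodule.mkQ_apply,
        Submodule.Quotient.mk_eq_zero]
    rw [hFp, hU, key]
    constructor
    · intro h
      funext i
      exact h i
    · intro h i
      exact congrFun h i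
  have hrange : Submodule.map U.mkQ (Submodule.comap
        (restrictTotalDegree (Fin n) ℝ (d + 1)).subtype (restrictTotalDegree (Fin n) ℝ d))
      = LinearMap.range (U.mkQ ∘ₗ (Submodule.comap
        (restrictTotalDegree (Fin n) ℝ (d + 1)).subtype
        (restrictTotalDegree (Fin n) ℝ d)).subtype) := by
    rw [LinearMap.range_comp, Submodule.range_subtype]
  exact finrank_range_le_of_ker_eq
    (A := ↥(Submodule.comap (restrictTotalDegree (Fin n) ℝ (d + 1)).subtype
      (restrictTotalDegree (Fin n) ℝ d)))
    (B := ↥(restrictTotalDegree (Fin n) ℝ (d + 1)) ⧸ U)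
    (U.mkQ ∘ₗ (Submodule.comap (restrictTotalDegree (Fin n) ℝ (d + 1)).subtype
      (restrictTotalDegree (Fin n) ℝ d)).subtype)
    (LinearMap.pi (fun i : Fin N =>
      (aeval (a i)).toLinearMap ∘ₗ (restrictTotalDegree (Fin n) ℝ (d + 1)).subtype ∘ₗ
      (Submodule.comap (restrictTotalDegree (Fin n) ℝ (d + 1)).subtype
        (restrictTotalDegree (Fin n) ℝ d)).subtype))
    (Submodule.map U.mkQ
      (Submodule.comap (restrictTotalDegree (Fin n) ℝ (d + 1)).subtype
        (restrictTotalDegree (Fin n) ℝ d))) hrange hker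
end

section
/- Every node of a quadrature rule for L lies in the complex variety of the truncated GNS kernel: if L(p) = Σᵢ₌₁^N λᵢ p(aᵢ) for all p ∈ ℝ[X]_{2d+2} with λᵢ > 0, then {a₁,…,a_N} ⊆ V(U_L), hence N ≤ |V_ℂ(U_L)| when the nodes are pairwise distinct. -/
open MvPolynomial

/-- Every node of a quadrature rule for `L` lies in the variety of the truncated GNS kernel
`U_L`; hence, when the nodes are pairwise distinct, `N ≤ |V_ℂ(U_L)|`. -/
theorem nodes_in_variety_of_kernel {n d N : ℕ}
    (L : MvPolynomial (Fin n) ℝ →ₗ[ℝ] ℝ)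
    (hL : ∀ p : MvPolynomial (Fin n) ℝ, p.totalDegree ≤ d + 1 → 0 ≤ L (p ^ 2))
    (a : Fin N → (Fin n → ℝ))
    (lam : Fin N → ℝ) (hlam : ∀ i, 0 < lam i)
    (hq : ∀ g : MvPolynomial (Fin n) ℝ, g.totalDegree ≤ 2 * d + 2 →
      L g = ∑ i, lam i * MvPolynomial.eval (a i) g) :
    (∀ p : MvPolynomial (Fin n) ℝ, p.totalDegree ≤ d + 1 → L (p ^ 2) = 0 →
      ∀ i, MvPolynomial.eval (a i) p = 0) ∧
    (Function.Injective a →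
      (N : Cardinal) ≤ Cardinal.mk
        {z : Fin n → ℂ | ∀ p : MvPolynomial (Fin n) ℝ, p.totalDegree ≤ d + 1 →
          L (p ^ 2) = 0 → MvPolynomial.aeval z p = 0}) := by
  have key : ∀ p : MvPolynomial (Fin n) ℝ, p.totalDegree ≤ d + 1 → L (p ^ 2) = 0 →
      ∀ i, MvPolynomial.eval (a i) p = 0 := by
    intro p hp hLp i
    have hdeg : (p ^ 2).totalDegree ≤ 2 * d + 2 := by
      calc (p ^ 2).totalDegree ≤ 2 * p.totalDegree := totalDegree_pow p 2
        _ ≤ 2 * (d + 1) := by omega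
        _ = 2 * d + 2 := by ring
    have hsum : ∑ i, lam i * MvPolynomial.eval (a i) (p ^ 2) = 0 := by
      rw [← hq _ hdeg, hLp]
    have hterm : ∀ j ∈ Finset.univ, 0 ≤ lam j * MvPolynomial.eval (a j) (p ^ 2) := by
      intro j _
      have : MvPolynomial.eval (a j) (p ^ 2) = (MvPolynomial.eval (a j) p) ^ 2 := by
        simp [pow_two]
      rw [this]
      exact mul_nonneg (hlam j).le (sq_nonneg _)
    have := (Finset.sum_eq_zero_iff_of_nonneg hterm).mp hsum i (Finset.mem_univ i)
    have h2 : (MvPolynomial.eval (a i) p) ^ 2 = 0 := by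
      have hl := (hlam i).ne'
      have : lam i * (MvPolynomial.eval (a i) p) ^ 2 = 0 := by
        simpa [pow_two] using this
      exact (mul_eq_zero.mp this).resolve_left hl
    exact pow_eq_zero_iff (n := 2) (by norm_num) |>.mp h2
  refine ⟨key, fun hinj => ?_⟩
  set S := {z : Fin n → ℂ | ∀ p : MvPolynomial (Fin n) ℝ, p.totalDegree ≤ d + 1 →
      L (p ^ 2) = 0 → MvPolynomial.aeval z p = 0}
  have hmem : ∀ i, (fun j => ((a i j : ℝ) : ℂ)) ∈ S := by
    intro i p hp hLp
    have : (MvPolynomial.aeval fun j => ((a i j : ℝ) : ℂ)) p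
        = algebraMap ℝ ℂ (MvPolynomial.eval (a i) p) := by
      have h := MvPolynomial.eval₂_comp_left (algebraMap ℝ ℂ) (RingHom.id ℝ) (a i) p
      rw [MvPolynomial.aeval_def, MvPolynomial.eval, coe_eval₂Hom, h]
      rfl
    rw [this, key p hp hLp i, map_zero]
  have hinj' : Function.Injective (fun i : Fin N => (⟨fun j => ((a i j : ℝ) : ℂ), hmem i⟩ : S)) := by
    intro i j hij
    apply hinj
    funext k
    have := congrArg (fun z : S => (z : Fin n → ℂ) k) hij
    simpa using Complex.ofReal_injective (by simpa using this)
  have := Cardinal.mk_le_of_injective hinj'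
  simpa using this
end

section
/- Suppose L ∈ ℝ[X₁,…,Xₙ]_{2d+2}* is flat (ℝ[X]_{d+1} = ℝ[X]_d + U_L) and nonnegative on squares. Then the truncated GNS multiplication operators M_{L,1},…,M_{L,n} on T_L pairwise commute. -/
open MvPolynomial

set_option maxHeartbeats 1000000

/-- Abstract core of the argument: flatness plus positivity forces the truncated GNS
multiplication operators to commute. -/
theorem flat_GNS_aux {n d : ℕ} {Q : Type} [AddCommGroup Q] [Module ℝ Q]
    (L : MvPolynomial (Fin n) ℝ →ₗ[ℝ] ℝ)
    (hL : ∀ p : MvPolynomial (Fin n) ℝ, p.totalDegree ≤ d + 1 → 0 ≤ L (p ^ 2))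
    (U : Submodule ℝ (MvPolynomial (Fin n) ℝ))
    (hU : ∀ p : MvPolynomial (Fin n) ℝ, p ∈ U ↔ (p.totalDegree ≤ d + 1 ∧
      ∀ q : MvPolynomial (Fin n) ℝ, q.totalDegree ≤ d + 1 → L (p * q) = 0))
    (W : Submodule ℝ (MvPolynomial (Fin n) ℝ))
    (hW : ∀ p : MvPolynomial (Fin n) ℝ, p ∈ W ↔ p.totalDegree ≤ d)
    (hflatX : ∀ (i : Fin n) (s : ↥W), ∃ a : ↥W,
      X i * (s : MvPolynomial (Fin n) ℝ) - (a : MvPolynomial (Fin n) ℝ) ∈ U)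
    (π : ↥W →ₗ[ℝ] Q)
    (hπ0 : ∀ w : ↥W, (w : MvPolynomial (Fin n) ℝ) ∈ U → π w = 0)
    (β : Q → Q → ℝ)
    (hβ : ∀ a b : ↥W, β (π a) (π b) =
      L ((a : MvPolynomial (Fin n) ℝ) * (b : MvPolynomial (Fin n) ℝ)))
    (M : Fin n → Module.End ℝ ↥(LinearMap.range π))
    (hM : ∀ (i : Fin n) (p q : ↥W),
      β ((M i ⟨π p, ⟨p, rfl⟩⟩ : ↥(LinearMap.range π)) : Q) (π q) =
      L (X i * (p : MvPolynomial (Fin n) ℝ) * (q : MvPolynomial (Fin n) ℝ))) :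
    ∀ i j : Fin n, M i * M j = M j * M i := by
  classical
  -- degree facts
  have hdegW : ∀ s : ↥W, (s : MvPolynomial (Fin n) ℝ).totalDegree ≤ d := fun s =>
    (hW _).1 s.2
  have hdegW' : ∀ s : ↥W, (s : MvPolynomial (Fin n) ℝ).totalDegree ≤ d + 1 := fun s =>
    le_trans (hdegW s) (Nat.le_succ d)
  have hdegX : ∀ (i : Fin n) (s : ↥W),
      (X i * (s : MvPolynomial (Fin n) ℝ)).totalDegree ≤ d + 1 := by
    intro i s
    refine le_trans (totalDegree_mul _ _) ?_
    have := hdegW s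
    simp only [totalDegree_X]
    omega
  -- Cauchy–Schwarz style consequence of positivity
  have hCS : ∀ p q : MvPolynomial (Fin n) ℝ, p.totalDegree ≤ d + 1 → q.totalDegree ≤ d + 1 →
      L (p ^ 2) = 0 → L (p * q) = 0 := by
    intro p q hp hq hp2
    by_contra hne
    set c := L (p * q) with hc
    set t := -(L (q ^ 2) + 1) / (2 * c) with ht
    have hdeg : (t • p + q).totalDegree ≤ d + 1 :=
      le_trans (totalDegree_add _ _) (max_le (le_trans (totalDegree_smul_le _ _) hp) hq)
    have hexp : (t • p + q) ^ 2 = (t * t) • p ^ 2 + (2 * t) • (p * q) + q ^ 2 := by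
      simp only [smul_eq_C_mul, map_mul, map_ofNat]
      ring
    have hpos := hL _ hdeg
    rw [hexp, map_add, map_add, map_smul, map_smul, hp2, smul_eq_mul, smul_eq_mul,
      mul_zero] at hpos
    have h2tc : 2 * t * c = -(L (q ^ 2) + 1) := by
      rw [ht]; field_simp
    rw [← hc] at hpos
    nlinarith [hL q hq, hpos, h2tc]
  -- vanishing against W implies membership in U
  have hUmem : ∀ w : ↥W,
      (∀ s : ↥W, L ((w : MvPolynomial (Fin n) ℝ) * (s : MvPolynomial (Fin n) ℝ)) = 0) →
      (w : MvPolynomial (Fin n) ℝ) ∈ U := by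
    intro w hvanish
    rw [hU]
    refine ⟨hdegW' w, fun q hq => ?_⟩
    have hp2 : L ((w : MvPolynomial (Fin n) ℝ) ^ 2) = 0 := by
      rw [sq]; exact hvanish w
    exact hCS _ q (hdegW' w) hq hp2
  -- L vanishes against elements of U
  have hUkill : ∀ u ∈ U, ∀ q : MvPolynomial (Fin n) ℝ, q.totalDegree ≤ d + 1 →
      L (u * q) = 0 := fun u hu q hq => ((hU u).1 hu).2 q hq
  -- uniqueness of representatives
  have huniq : ∀ w1 w2 : ↥W,
      (∀ s : ↥W, L ((w1 : MvPolynomial (Fin n) ℝ) * (s : MvPolynomial (Fin n) ℝ)) =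
        L ((w2 : MvPolynomial (Fin n) ℝ) * (s : MvPolynomial (Fin n) ℝ))) →
      π w1 = π w2 := by
    intro w1 w2 hw
    have hmem : ((w1 - w2 : ↥W) : MvPolynomial (Fin n) ℝ) ∈ U := by
      refine hUmem (w1 - w2) fun s => ?_
      push_cast [sub_mul]
      rw [map_sub, hw s, sub_self]
    have h0 : π w1 - π w2 = 0 := by rw [← map_sub]; exact hπ0 _ hmem
    exact sub_eq_zero.mp h0
  -- characterization of M on arbitrary representatives
  have hM' : ∀ (i : Fin n) (x : ↥(LinearMap.range π)) (p : ↥W),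
      (x : Q) = π p →
      ∀ q : ↥W, β ((M i x : ↥(LinearMap.range π)) : Q) (π q) =
        L (X i * (p : MvPolynomial (Fin n) ℝ) * (q : MvPolynomial (Fin n) ℝ)) := by
    intro i x p hx q
    have hxe : x = ⟨π p, ⟨p, rfl⟩⟩ := Subtype.ext hx
    rw [hxe]
    exact hM i p q
  -- the representative of `M i x` satisfies the moment identity
  have hstep : ∀ (i : Fin n) (x : ↥(LinearMap.range π)) (p r : ↥W),
      (x : Q) = π p → ((M i x : ↥(LinearMap.range π)) : Q) = π r →
      ∀ s : ↥W, L ((r : MvPolynomial (Fin n) ℝ) * (s : MvPolynomial (Fin n) ℝ)) =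
        L (X i * (p : MvPolynomial (Fin n) ℝ) * (s : MvPolynomial (Fin n) ℝ)) := by
    intro i x p r hx hr s
    rw [← hβ r s, ← hr]
    exact hM' i x p hx s
  -- main transfer using flatness
  have htrans : ∀ (i j : Fin n) (p r : ↥W),
      (∀ s : ↥W, L ((r : MvPolynomial (Fin n) ℝ) * (s : MvPolynomial (Fin n) ℝ)) =
        L (X j * (p : MvPolynomial (Fin n) ℝ) * (s : MvPolynomial (Fin n) ℝ))) →
      ∀ s : ↥W, L (X i * (r : MvPolynomial (Fin n) ℝ) * (s : MvPolynomial (Fin n) ℝ)) =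
        L (X i * X j * (p : MvPolynomial (Fin n) ℝ) * (s : MvPolynomial (Fin n) ℝ)) := by
    intro i j p r hrep s
    obtain ⟨a, hu⟩ := hflatX i s
    set u : MvPolynomial (Fin n) ℝ :=
      X i * (s : MvPolynomial (Fin n) ℝ) - (a : MvPolynomial (Fin n) ℝ) with hudef
    have hau : X i * (s : MvPolynomial (Fin n) ℝ) = (a : MvPolynomial (Fin n) ℝ) + u := by
      rw [hudef]; ring
    have h1 : X i * (r : MvPolynomial (Fin n) ℝ) * (s : MvPolynomial (Fin n) ℝ) =
        (r : MvPolynomial (Fin n) ℝ) * (a : MvPolynomial (Fin n) ℝ) +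
        u * (r : MvPolynomial (Fin n) ℝ) := by
      rw [show X i * (r : MvPolynomial (Fin n) ℝ) * (s : MvPolynomial (Fin n) ℝ) =
        (r : MvPolynomial (Fin n) ℝ) * (X i * (s : MvPolynomial (Fin n) ℝ)) by ring, hau]
      ring
    have h2 : X i * X j * (p : MvPolynomial (Fin n) ℝ) * (s : MvPolynomial (Fin n) ℝ) =
        X j * (p : MvPolynomial (Fin n) ℝ) * (a : MvPolynomial (Fin n) ℝ) +
        u * (X j * (p : MvPolynomial (Fin n) ℝ)) := by
      rw [show X i * X j * (p : MvPolynomial (Fin n) ℝ) * (s : MvPolynomial (Fin n) ℝ) =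
        (X j * (p : MvPolynomial (Fin n) ℝ)) * (X i * (s : MvPolynomial (Fin n) ℝ)) by ring,
        hau]
      ring
    rw [h1, h2, map_add, map_add, hUkill u hu _ (hdegW' r), hUkill u hu _ (hdegX j p),
      hrep a]
  -- conclude commutativity
  intro i j
  refine LinearMap.ext fun x => ?_
  rw [Module.End.mul_apply, Module.End.mul_apply]
  obtain ⟨p, hp⟩ := x.2
  have hp : (x : Q) = π p := hp.symm
  obtain ⟨rj, hrj⟩ := (M j x).2
  have hrj : ((M j x : ↥(LinearMap.range π)) : Q) = π rj := hrj.symm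
  obtain ⟨ri, hri⟩ := (M i x).2
  have hri : ((M i x : ↥(LinearMap.range π)) : Q) = π ri := hri.symm
  obtain ⟨wij, hwij⟩ := (M i (M j x)).2
  have hwij : ((M i (M j x) : ↥(LinearMap.range π)) : Q) = π wij := hwij.symm
  obtain ⟨wji, hwji⟩ := (M j (M i x)).2
  have hwji : ((M j (M i x) : ↥(LinearMap.range π)) : Q) = π wji := hwji.symm
  have hj := hstep j x p rj hp hrj
  have hi := hstep i x p ri hp hri
  have hij := hstep i (M j x) rj wij hrj hwij
  have hji := hstep j (M i x) ri wji hri hwji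
  have hfinal : ∀ s : ↥W,
      L ((wij : MvPolynomial (Fin n) ℝ) * (s : MvPolynomial (Fin n) ℝ)) =
      L ((wji : MvPolynomial (Fin n) ℝ) * (s : MvPolynomial (Fin n) ℝ)) := by
    intro s
    rw [hij s, hji s, htrans i j p rj hj s, htrans j i p ri hi s]
    congr 1
    ring
  have heq := huniq wij wji hfinal
  exact Subtype.ext (by rw [hwij, hwji, heq])

/-- If `L ∈ ℝ[X]_{2d+2}*` is flat (`ℝ[X]_{d+1} = ℝ[X]_d + U_L`) and nonnegative on squares,
then the truncated GNS multiplication operators `M_{L,1},…,M_{L,n}` on `T_L` pairwise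
commute.  The operators are characterized by `⟨M_{L,i} p̄, q̄⟩_L = L(Xᵢ p q)` for
`p, q ∈ ℝ[X]_d`, where `β(p̄, q̄) = L(pq)` is the GNS inner product. -/
theorem flat_implies_GNS_operators_commute {n d : ℕ}
    (L : MvPolynomial (Fin n) ℝ →ₗ[ℝ] ℝ)
    (hL : ∀ p : MvPolynomial (Fin n) ℝ, p.totalDegree ≤ d + 1 → 0 ≤ L (p ^ 2))
    (U : Submodule ℝ (MvPolynomial (Fin n) ℝ))
    (hU : ∀ p : MvPolynomial (Fin n) ℝ, p ∈ U ↔ (p.totalDegree ≤ d + 1 ∧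
      ∀ q : MvPolynomial (Fin n) ℝ, q.totalDegree ≤ d + 1 → L (p * q) = 0))
    (hflat : restrictTotalDegree (Fin n) ℝ (d + 1) ≤ restrictTotalDegree (Fin n) ℝ d ⊔ U)
    (hAB : restrictTotalDegree (Fin n) ℝ d ≤ restrictTotalDegree (Fin n) ℝ (d + 1))
    (β : (↥(restrictTotalDegree (Fin n) ℝ (d + 1)) ⧸
        U.comap (restrictTotalDegree (Fin n) ℝ (d + 1)).subtype) →
      (↥(restrictTotalDegree (Fin n) ℝ (d + 1)) ⧸
        U.comap (restrictTotalDegree (Fin n) ℝ (d + 1)).subtype) → ℝ)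
    (hβ : ∀ p q : ↥(restrictTotalDegree (Fin n) ℝ (d + 1)),
      β ((U.comap (restrictTotalDegree (Fin n) ℝ (d + 1)).subtype).mkQ p)
        ((U.comap (restrictTotalDegree (Fin n) ℝ (d + 1)).subtype).mkQ q) =
      L ((p : MvPolynomial (Fin n) ℝ) * (q : MvPolynomial (Fin n) ℝ)))
    (M : Fin n → Module.End ℝ
      ↥(LinearMap.range ((U.comap (restrictTotalDegree (Fin n) ℝ (d + 1)).subtype).mkQ ∘ₗ
        Submodule.inclusion hAB)))
    (hM : ∀ (i : Fin n) (p q : ↥(restrictTotalDegree (Fin n) ℝ d)),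
      β (M i ⟨((U.comap (restrictTotalDegree (Fin n) ℝ (d + 1)).subtype).mkQ ∘ₗ
            Submodule.inclusion hAB) p, ⟨p, rfl⟩⟩ :
          ↥(restrictTotalDegree (Fin n) ℝ (d + 1)) ⧸
            U.comap (restrictTotalDegree (Fin n) ℝ (d + 1)).subtype)
        (((U.comap (restrictTotalDegree (Fin n) ℝ (d + 1)).subtype).mkQ ∘ₗ
            Submodule.inclusion hAB) q) =
      L (X i * (p : MvPolynomial (Fin n) ℝ) * (q : MvPolynomial (Fin n) ℝ))) :
    ∀ i j : Fin n, M i * M j = M j * M i := by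
  have hW : ∀ p : MvPolynomial (Fin n) ℝ, p ∈ restrictTotalDegree (Fin n) ℝ d ↔
      p.totalDegree ≤ d := fun p => mem_restrictTotalDegree (Fin n) d p
  have hflatX : ∀ (i : Fin n) (s : ↥(restrictTotalDegree (Fin n) ℝ d)), ∃ a :
      ↥(restrictTotalDegree (Fin n) ℝ d),
      X i * (s : MvPolynomial (Fin n) ℝ) - (a : MvPolynomial (Fin n) ℝ) ∈ U := by
    intro i s
    have hdeg : (X i * (s : MvPolynomial (Fin n) ℝ)).totalDegree ≤ d + 1 := by
      refine le_trans (totalDegree_mul _ _) ?_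
      have := (hW _).1 s.2
      simp only [totalDegree_X]
      omega
    have hmemV : X i * (s : MvPolynomial (Fin n) ℝ) ∈ restrictTotalDegree (Fin n) ℝ (d + 1) :=
      (mem_restrictTotalDegree (Fin n) (d + 1) _).2 hdeg
    obtain ⟨a, ha, u, hu, hau⟩ := Submodule.mem_sup.1 (hflat hmemV)
    refine ⟨⟨a, ha⟩, ?_⟩
    have : X i * (s : MvPolynomial (Fin n) ℝ) - a = u := by rw [← hau]; ring
    rw [this]
    exact hu
  have hπ0 : ∀ w : ↥(restrictTotalDegree (Fin n) ℝ d),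
      (w : MvPolynomial (Fin n) ℝ) ∈ U →
      ((U.comap (restrictTotalDegree (Fin n) ℝ (d + 1)).subtype).mkQ ∘ₗ
        Submodule.inclusion hAB) w = 0 := by
    intro w hw
    have hmem : Submodule.inclusion hAB w ∈
        U.comap (restrictTotalDegree (Fin n) ℝ (d + 1)).subtype := by
      simpa using hw
    simp only [LinearMap.comp_apply, Submodule.mkQ_apply]
    exact (Submodule.Quotient.mk_eq_zero _).2 hmem
  have hβ' : ∀ a b : ↥(restrictTotalDegree (Fin n) ℝ d),
      β (((U.comap (restrictTotalDegree (Fin n) ℝ (d + 1)).subtype).mkQ ∘ₗ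
          Submodule.inclusion hAB) a)
        (((U.comap (restrictTotalDegree (Fin n) ℝ (d + 1)).subtype).mkQ ∘ₗ
          Submodule.inclusion hAB) b) =
      L ((a : MvPolynomial (Fin n) ℝ) * (b : MvPolynomial (Fin n) ℝ)) := by
    intro a b
    simpa using hβ (Submodule.inclusion hAB a) (Submodule.inclusion hAB b)
  exact flat_GNS_aux L hL U hU (restrictTotalDegree (Fin n) ℝ d) hW hflatX
    ((U.comap (restrictTotalDegree (Fin n) ℝ (d + 1)).subtype).mkQ ∘ₗ
      Submodule.inclusion hAB) hπ0 β hβ' M hM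
end

section
/- Assume the truncated GNS multiplication operators M_{L,1},…,M_{L,n} pairwise commute. Then for all p ∈ ℝ[X]_{d+1}: p(M_{L,1},…,M_{L,n})(1̄) = Π_L(p̄), where 1̄ is the class of the constant polynomial 1 and Π_L is the orthogonal projection of V_L onto T_L. -/
lemma aux_factor {Mo : Type*} [Monoid Mo] : ∀ {n : ℕ} (f : Fin n → Mo),
    (∀ i j, Commute (f i) (f j)) → ∀ (α : Fin n → ℕ) (i : Fin n), α i ≠ 0 →
    (List.ofFn fun j => f j ^ α j).prod =
      f i * (List.ofFn fun j => f j ^ (Function.update α i (α i - 1)) j).prod := by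
  intro n
  induction n with
  | zero => exact fun f _ α i => absurd i.2 (by omega)
  | succ m ih =>
    intro f hc α i hi
    rw [List.ofFn_succ, List.ofFn_succ, List.prod_cons, List.prod_cons]
    refine Fin.cases ?_ ?_ i hi <;> clear hi i
    · intro hi
      have h0 : f 0 ^ α 0 = f 0 * f 0 ^ (α 0 - 1) := by
        conv_lhs => rw [← Nat.succ_pred_eq_of_pos (Nat.pos_of_ne_zero hi)]
        rw [pow_succ']; rfl
      rw [h0, Function.update_self, mul_assoc]
      congr 2
    · intro j hj
      have ihj := ih (fun k => f k.succ) (fun a b => hc _ _) (fun k => α k.succ) j hj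
      rw [ihj, ← mul_assoc, ((hc 0 j.succ).pow_left (α 0)).eq, mul_assoc]
      congr 1
      rw [Function.update_apply, if_neg (Fin.succ_ne_zero j).symm]
      refine congrArg _ (congrArg List.prod (congrArg List.ofFn (funext fun k => ?_)))
      congr 1
      rcases eq_or_ne k j with rfl | hk
      · simp [Function.update_self]
      · rw [Function.update_of_ne hk, Function.update_of_ne (fun h => hk (Fin.succ_injective _ h))]
open MvPolynomial

lemma aux_cauchy {n d : ℕ} (L : MvPolynomial (Fin n) ℝ →ₗ[ℝ] ℝ)
    (hL : ∀ p : MvPolynomial (Fin n) ℝ, p.totalDegree ≤ d + 1 → 0 ≤ L (p ^ 2))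
    (r s : MvPolynomial (Fin n) ℝ) (hr : r.totalDegree ≤ d + 1) (hs : s.totalDegree ≤ d + 1)
    (h0 : L (r * r) = 0) : L (r * s) = 0 := by
  have key : ∀ t : ℝ, 0 ≤ L (s * s) * t ^ 2 + 2 * L (r * s) * t := by
    intro t
    have hdeg : (r + t • s).totalDegree ≤ d + 1 :=
      le_trans (totalDegree_add _ _) (max_le hr (le_trans (totalDegree_smul_le _ _) hs))
    have h := hL _ hdeg
    have expand : (r + t • s) ^ 2 = r * r + (2 * t) • (r * s) + (t ^ 2) • (s * s) := by
      simp only [smul_eq_C_mul, map_mul, map_pow, map_ofNat]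
      ring
    rw [expand, map_add, map_add, map_smul, map_smul, h0, smul_eq_mul, smul_eq_mul] at h
    linarith
  have ha : 0 ≤ L (s * s) := by have := hL s hs; rwa [sq] at this
  set a := L (s * s)
  set b := L (r * s)
  by_contra hb
  have h := key (-b / (a + 1))
  have hpos : (0:ℝ) < a + 1 := by linarith
  have heq : a * (-b / (a + 1)) ^ 2 + 2 * b * (-b / (a + 1)) =
      -(b ^ 2) * (a + 2) / (a + 1) ^ 2 := by
    field_simp
    ring
  rw [heq, le_div_iff₀ (by positivity)] at h
  have hb2 : 0 < b ^ 2 := by positivity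
  nlinarith [hb2]
open MvPolynomial

noncomputable def auxb0 {n d : ℕ} (L : MvPolynomial (Fin n) ℝ →ₗ[ℝ] ℝ) :
    ↥(restrictTotalDegree (Fin n) ℝ (d + 1)) →ₗ[ℝ]
      ↥(restrictTotalDegree (Fin n) ℝ (d + 1)) →ₗ[ℝ] ℝ :=
  LinearMap.mk₂ ℝ (fun a b : ↥(restrictTotalDegree (Fin n) ℝ (d + 1)) =>
      L ((a : MvPolynomial (Fin n) ℝ) * b))
    (fun a a' b => by push_cast; rw [add_mul, map_add])
    (fun c a b => by push_cast; rw [smul_mul_assoc, map_smul])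
    (fun a b b' => by push_cast; rw [mul_add, map_add])
    (fun c a b => by push_cast; rw [mul_smul_comm, map_smul])

@[simp] lemma auxb0_apply {n d : ℕ} (L : MvPolynomial (Fin n) ℝ →ₗ[ℝ] ℝ)
    (a b : ↥(restrictTotalDegree (Fin n) ℝ (d + 1))) :
    auxb0 (d := d) L a b = L ((a : MvPolynomial (Fin n) ℝ) * b) := rfl

noncomputable def auxb1 {n d : ℕ} (L : MvPolynomial (Fin n) ℝ →ₗ[ℝ] ℝ)
    (U : Submodule ℝ (MvPolynomial (Fin n) ℝ))
    (hvan : ∀ w : ↥(restrictTotalDegree (Fin n) ℝ (d + 1)),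
      (w : MvPolynomial (Fin n) ℝ) ∈ U →
      ∀ q : ↥(restrictTotalDegree (Fin n) ℝ (d + 1)),
        L ((w : MvPolynomial (Fin n) ℝ) * q) = 0) :
    ↥(restrictTotalDegree (Fin n) ℝ (d + 1)) →ₗ[ℝ]
      (↥(restrictTotalDegree (Fin n) ℝ (d + 1)) ⧸
        U.comap (restrictTotalDegree (Fin n) ℝ (d + 1)).subtype) →ₗ[ℝ] ℝ where
  toFun := fun p => (U.comap (restrictTotalDegree (Fin n) ℝ (d + 1)).subtype).liftQ
    (auxb0 L p) (fun w hw => by simpa [mul_comm] using hvan w hw p)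
  map_add' := fun a a' => by
    apply LinearMap.ext; intro x
    obtain ⟨b, rfl⟩ := Submodule.mkQ_surjective _ x
    simp only [Submodule.mkQ_apply, Submodule.liftQ_apply, LinearMap.add_apply, map_add,
      LinearMap.add_apply, auxb0_apply]
  map_smul' := fun c a => by
    apply LinearMap.ext; intro x
    obtain ⟨b, rfl⟩ := Submodule.mkQ_surjective _ x
    simp only [Submodule.mkQ_apply, Submodule.liftQ_apply, RingHom.id_apply,
      LinearMap.smul_apply, auxb0_apply]
    push_cast
    rw [smul_mul_assoc, map_smul]

@[simp] lemma auxb1_apply {n d : ℕ} (L : MvPolynomial (Fin n) ℝ →ₗ[ℝ] ℝ)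
    (U : Submodule ℝ (MvPolynomial (Fin n) ℝ)) (hvan)
    (a b : ↥(restrictTotalDegree (Fin n) ℝ (d + 1))) :
    auxb1 L U hvan a ((U.comap (restrictTotalDegree (Fin n) ℝ (d + 1)).subtype).mkQ b) =
      L ((a : MvPolynomial (Fin n) ℝ) * b) := by
  simp [auxb1, Submodule.liftQ_apply]

noncomputable def auxB2 {n d : ℕ} (L : MvPolynomial (Fin n) ℝ →ₗ[ℝ] ℝ)
    (U : Submodule ℝ (MvPolynomial (Fin n) ℝ))
    (hvan : ∀ w : ↥(restrictTotalDegree (Fin n) ℝ (d + 1)),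
      (w : MvPolynomial (Fin n) ℝ) ∈ U →
      ∀ q : ↥(restrictTotalDegree (Fin n) ℝ (d + 1)),
        L ((w : MvPolynomial (Fin n) ℝ) * q) = 0) :
    (↥(restrictTotalDegree (Fin n) ℝ (d + 1)) ⧸
        U.comap (restrictTotalDegree (Fin n) ℝ (d + 1)).subtype) →ₗ[ℝ]
      (↥(restrictTotalDegree (Fin n) ℝ (d + 1)) ⧸
        U.comap (restrictTotalDegree (Fin n) ℝ (d + 1)).subtype) →ₗ[ℝ] ℝ :=
  (U.comap (restrictTotalDegree (Fin n) ℝ (d + 1)).subtype).liftQ (auxb1 L U hvan)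
    (fun w hw => by
      apply LinearMap.ext; intro x
      obtain ⟨b, rfl⟩ := Submodule.mkQ_surjective _ x
      exact (auxb1_apply L U hvan w b).trans (hvan w hw b))

@[simp] lemma auxB2_apply {n d : ℕ} (L : MvPolynomial (Fin n) ℝ →ₗ[ℝ] ℝ)
    (U : Submodule ℝ (MvPolynomial (Fin n) ℝ)) (hvan)
    (a b : ↥(restrictTotalDegree (Fin n) ℝ (d + 1))) :
    auxB2 L U hvan
      ((U.comap (restrictTotalDegree (Fin n) ℝ (d + 1)).subtype).mkQ a)
      ((U.comap (restrictTotalDegree (Fin n) ℝ (d + 1)).subtype).mkQ b) =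
    L ((a : MvPolynomial (Fin n) ℝ) * b) := by
  simp only [auxB2, Submodule.mkQ_apply, Submodule.liftQ_apply]
  exact auxb1_apply L U hvan a b

set_option maxHeartbeats 1000000 in
/-- If the truncated GNS multiplication operators `M_{L,1},…,M_{L,n}` pairwise commute, then
for every `p ∈ ℝ[X]_{d+1}` one has `p(M_{L,1},…,M_{L,n})(1̄) = Π_L(p̄)`, where `Π_L` is the
orthogonal projection of `V_L = ℝ[X]_{d+1}/U_L` onto the GNS truncation `T_L` (the image of
`ℝ[X]_d`), `β(p̄,q̄) = L(pq)` is the GNS inner product, and `p(M_{L,1},…,M_{L,n})` is formed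
by substituting the commuting operators into `p`. -/
theorem commuting_operators_eval_one {n d : ℕ}
    (L : MvPolynomial (Fin n) ℝ →ₗ[ℝ] ℝ)
    (hL : ∀ p : MvPolynomial (Fin n) ℝ, p.totalDegree ≤ d + 1 → 0 ≤ L (p ^ 2))
    (U : Submodule ℝ (MvPolynomial (Fin n) ℝ))
    (hU : ∀ p : MvPolynomial (Fin n) ℝ, p ∈ U ↔ (p.totalDegree ≤ d + 1 ∧
      ∀ q : MvPolynomial (Fin n) ℝ, q.totalDegree ≤ d + 1 → L (p * q) = 0))
    (hAB : restrictTotalDegree (Fin n) ℝ d ≤ restrictTotalDegree (Fin n) ℝ (d + 1))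
    (h1 : (1 : MvPolynomial (Fin n) ℝ) ∈ restrictTotalDegree (Fin n) ℝ d)
    (β : (↥(restrictTotalDegree (Fin n) ℝ (d + 1)) ⧸
        U.comap (restrictTotalDegree (Fin n) ℝ (d + 1)).subtype) →
      (↥(restrictTotalDegree (Fin n) ℝ (d + 1)) ⧸
        U.comap (restrictTotalDegree (Fin n) ℝ (d + 1)).subtype) → ℝ)
    (hβ : ∀ p q : ↥(restrictTotalDegree (Fin n) ℝ (d + 1)),
      β ((U.comap (restrictTotalDegree (Fin n) ℝ (d + 1)).subtype).mkQ p)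
        ((U.comap (restrictTotalDegree (Fin n) ℝ (d + 1)).subtype).mkQ q) =
      L ((p : MvPolynomial (Fin n) ℝ) * (q : MvPolynomial (Fin n) ℝ)))
    (Pr : (↥(restrictTotalDegree (Fin n) ℝ (d + 1)) ⧸
        U.comap (restrictTotalDegree (Fin n) ℝ (d + 1)).subtype) →ₗ[ℝ]
      (↥(restrictTotalDegree (Fin n) ℝ (d + 1)) ⧸
        U.comap (restrictTotalDegree (Fin n) ℝ (d + 1)).subtype))
    (hPr1 : ∀ x, Pr x ∈
      LinearMap.range ((U.comap (restrictTotalDegree (Fin n) ℝ (d + 1)).subtype).mkQ ∘ₗ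
        Submodule.inclusion hAB))
    (hPr2 : ∀ x, ∀ t ∈
      LinearMap.range ((U.comap (restrictTotalDegree (Fin n) ℝ (d + 1)).subtype).mkQ ∘ₗ
        Submodule.inclusion hAB), β (x - Pr x) t = 0)
    (M : Fin n → Module.End ℝ
      ↥(LinearMap.range ((U.comap (restrictTotalDegree (Fin n) ℝ (d + 1)).subtype).mkQ ∘ₗ
        Submodule.inclusion hAB)))
    (hM : ∀ (i : Fin n) (p q : ↥(restrictTotalDegree (Fin n) ℝ d)),
      β (M i ⟨((U.comap (restrictTotalDegree (Fin n) ℝ (d + 1)).subtype).mkQ ∘ₗ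
            Submodule.inclusion hAB) p, ⟨p, rfl⟩⟩ :
          ↥(restrictTotalDegree (Fin n) ℝ (d + 1)) ⧸
            U.comap (restrictTotalDegree (Fin n) ℝ (d + 1)).subtype)
        (((U.comap (restrictTotalDegree (Fin n) ℝ (d + 1)).subtype).mkQ ∘ₗ
            Submodule.inclusion hAB) q) =
      L (X i * (p : MvPolynomial (Fin n) ℝ) * (q : MvPolynomial (Fin n) ℝ)))
    (hcomm : ∀ i j : Fin n, M i * M j = M j * M i) :
    ∀ p : ↥(restrictTotalDegree (Fin n) ℝ (d + 1)),
      (((∑ α ∈ (p : MvPolynomial (Fin n) ℝ).support,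
          (p : MvPolynomial (Fin n) ℝ).coeff α •
            (List.ofFn fun i : Fin n => M i ^ α i).prod)
        ⟨((U.comap (restrictTotalDegree (Fin n) ℝ (d + 1)).subtype).mkQ ∘ₗ
            Submodule.inclusion hAB) ⟨1, h1⟩, ⟨⟨1, h1⟩, rfl⟩⟩ :
          ↥(LinearMap.range
            ((U.comap (restrictTotalDegree (Fin n) ℝ (d + 1)).subtype).mkQ ∘ₗ
              Submodule.inclusion hAB))) :
        ↥(restrictTotalDegree (Fin n) ℝ (d + 1)) ⧸
          U.comap (restrictTotalDegree (Fin n) ℝ (d + 1)).subtype) =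
      Pr ((U.comap (restrictTotalDegree (Fin n) ℝ (d + 1)).subtype).mkQ p) := by
  classical
  -- degree facts
  have hdegB : ∀ b : ↥(restrictTotalDegree (Fin n) ℝ (d + 1)),
      (b : MvPolynomial (Fin n) ℝ).totalDegree ≤ d + 1 :=
    fun b => (mem_restrictTotalDegree _ _ _).mp b.2
  have hdegA : ∀ a : ↥(restrictTotalDegree (Fin n) ℝ d),
      (a : MvPolynomial (Fin n) ℝ).totalDegree ≤ d :=
    fun a => (mem_restrictTotalDegree _ _ _).mp a.2
  have hvan : ∀ w : ↥(restrictTotalDegree (Fin n) ℝ (d + 1)),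
      (w : MvPolynomial (Fin n) ℝ) ∈ U →
      ∀ q : ↥(restrictTotalDegree (Fin n) ℝ (d + 1)),
        L ((w : MvPolynomial (Fin n) ℝ) * (q : MvPolynomial (Fin n) ℝ)) = 0 :=
    fun w hw q => ((hU _).mp hw).2 _ (hdegB q)
  have hβeq : ∀ x y, β x y = auxB2 L U hvan x y := by
    intro x y
    obtain ⟨a, rfl⟩ := (U.comap (restrictTotalDegree (Fin n) ℝ (d + 1)).subtype).mkQ_surjective x
    obtain ⟨b, rfl⟩ := (U.comap (restrictTotalDegree (Fin n) ℝ (d + 1)).subtype).mkQ_surjective y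
    rw [hβ, auxB2_apply]
  have hQcoe : ∀ r : ↥(restrictTotalDegree (Fin n) ℝ d),
      ((Submodule.inclusion hAB r : ↥(restrictTotalDegree (Fin n) ℝ (d + 1))) :
        MvPolynomial (Fin n) ℝ) = r := fun r => rfl
  have hβQ : ∀ r q : ↥(restrictTotalDegree (Fin n) ℝ d),
      β (((U.comap (restrictTotalDegree (Fin n) ℝ (d + 1)).subtype).mkQ ∘ₗ Submodule.inclusion hAB) r) (((U.comap (restrictTotalDegree (Fin n) ℝ (d + 1)).subtype).mkQ ∘ₗ Submodule.inclusion hAB) q) = L ((r : MvPolynomial (Fin n) ℝ) * (q : MvPolynomial (Fin n) ℝ)) := by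
    intro r q
    have := hβ (Submodule.inclusion hAB r) (Submodule.inclusion hAB q)
    rwa [hQcoe, hQcoe] at this
  -- the radical property
  have radical : ∀ r : ↥(restrictTotalDegree (Fin n) ℝ d),
      (∀ q : ↥(restrictTotalDegree (Fin n) ℝ d),
        L ((r : MvPolynomial (Fin n) ℝ) * (q : MvPolynomial (Fin n) ℝ)) = 0) → ((U.comap (restrictTotalDegree (Fin n) ℝ (d + 1)).subtype).mkQ ∘ₗ Submodule.inclusion hAB) r = 0 := by
    intro r hr
    have hmem : (r : MvPolynomial (Fin n) ℝ) ∈ U := by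
      rw [hU]
      refine ⟨le_trans (hdegA r) (Nat.le_succ d), fun q hq => ?_⟩
      exact aux_cauchy L hL _ q (le_trans (hdegA r) (Nat.le_succ d)) hq (hr r)
    show (U.comap (restrictTotalDegree (Fin n) ℝ (d + 1)).subtype).mkQ (Submodule.inclusion hAB r) = 0
    rw [Submodule.mkQ_apply, Submodule.Quotient.mk_eq_zero]
    exact hmem
  -- uniqueness of the projection
  have unique : ∀ (x : ↥(restrictTotalDegree (Fin n) ℝ (d + 1)) ⧸ (U.comap (restrictTotalDegree (Fin n) ℝ (d + 1)).subtype))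
      (r : ↥(restrictTotalDegree (Fin n) ℝ d)),
      (∀ q : ↥(restrictTotalDegree (Fin n) ℝ d), β (x - ((U.comap (restrictTotalDegree (Fin n) ℝ (d + 1)).subtype).mkQ ∘ₗ Submodule.inclusion hAB) r) (((U.comap (restrictTotalDegree (Fin n) ℝ (d + 1)).subtype).mkQ ∘ₗ Submodule.inclusion hAB) q) = 0) →
        ((U.comap (restrictTotalDegree (Fin n) ℝ (d + 1)).subtype).mkQ ∘ₗ Submodule.inclusion hAB) r = Pr x := by
    intro x r h
    obtain ⟨r', hr'⟩ := hPr1 x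
    suffices hs : ((U.comap (restrictTotalDegree (Fin n) ℝ (d + 1)).subtype).mkQ ∘ₗ Submodule.inclusion hAB) (r - r') = 0 by
      rw [map_sub, sub_eq_zero] at hs
      rw [hs, hr']
    apply radical
    intro q
    have h2 := hPr2 x (((U.comap (restrictTotalDegree (Fin n) ℝ (d + 1)).subtype).mkQ ∘ₗ Submodule.inclusion hAB) q) ⟨q, rfl⟩
    rw [← hr'] at h2
    have e1 : ((U.comap (restrictTotalDegree (Fin n) ℝ (d + 1)).subtype).mkQ ∘ₗ Submodule.inclusion hAB) (r - r') = (x - ((U.comap (restrictTotalDegree (Fin n) ℝ (d + 1)).subtype).mkQ ∘ₗ Submodule.inclusion hAB) r') - (x - ((U.comap (restrictTotalDegree (Fin n) ℝ (d + 1)).subtype).mkQ ∘ₗ Submodule.inclusion hAB) r) := by rw [map_sub]; abel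
    calc L ((((r - r') : ↥(restrictTotalDegree (Fin n) ℝ d)) : MvPolynomial (Fin n) ℝ) * (q : MvPolynomial (Fin n) ℝ))
        = β (((U.comap (restrictTotalDegree (Fin n) ℝ (d + 1)).subtype).mkQ ∘ₗ Submodule.inclusion hAB) (r - r')) (((U.comap (restrictTotalDegree (Fin n) ℝ (d + 1)).subtype).mkQ ∘ₗ Submodule.inclusion hAB) q) := (hβQ _ _).symm
      _ = β ((x - ((U.comap (restrictTotalDegree (Fin n) ℝ (d + 1)).subtype).mkQ ∘ₗ Submodule.inclusion hAB) r') - (x - ((U.comap (restrictTotalDegree (Fin n) ℝ (d + 1)).subtype).mkQ ∘ₗ Submodule.inclusion hAB) r)) (((U.comap (restrictTotalDegree (Fin n) ℝ (d + 1)).subtype).mkQ ∘ₗ Submodule.inclusion hAB) q) := by rw [e1]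
      _ = β (x - ((U.comap (restrictTotalDegree (Fin n) ℝ (d + 1)).subtype).mkQ ∘ₗ Submodule.inclusion hAB) r') (((U.comap (restrictTotalDegree (Fin n) ℝ (d + 1)).subtype).mkQ ∘ₗ Submodule.inclusion hAB) q) - β (x - ((U.comap (restrictTotalDegree (Fin n) ℝ (d + 1)).subtype).mkQ ∘ₗ Submodule.inclusion hAB) r) (((U.comap (restrictTotalDegree (Fin n) ℝ (d + 1)).subtype).mkQ ∘ₗ Submodule.inclusion hAB) q) := by
          rw [hβeq, hβeq, hβeq, map_sub, LinearMap.sub_apply]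
      _ = 0 := by rw [h2, h q, sub_zero]
  -- membership of monomials
  have hmemA : ∀ α : Fin n →₀ ℕ, (α.sum fun _ e => e) ≤ d →
      (monomial α (1:ℝ)) ∈ restrictTotalDegree (Fin n) ℝ d := by
    intro α hα
    rw [mem_restrictTotalDegree, totalDegree_monomial _ one_ne_zero]
    exact hα
  -- elementary facts about stripping one variable off a monomial
  have hstrip : ∀ (α : Fin n →₀ ℕ) (i : Fin n), α i ≠ 0 →
      (((α - Finsupp.single i 1 : Fin n →₀ ℕ) : Fin n → ℕ) = Function.update ⇑α i (α i - 1)) ∧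
      (Finsupp.single i 1 + (α - Finsupp.single i 1) = α) ∧
      (1 + ((α - Finsupp.single i 1).sum fun _ e => e) = α.sum fun _ e => e) := by
    intro α i hi
    have hc : ((α - Finsupp.single i 1 : Fin n →₀ ℕ) : Fin n → ℕ) = Function.update ⇑α i (α i - 1) := by
      funext j
      rcases eq_or_ne j i with rfl | hj
      · simp [Finsupp.sub_apply, Finsupp.single_eq_same]
      · simp [Finsupp.sub_apply, Finsupp.single_apply, Ne.symm hj, Function.update_of_ne hj]
    have hval : ∀ j, ((α - Finsupp.single i 1 : Fin n →₀ ℕ) j) = Function.update ⇑α i (α i - 1) j :=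
      fun j => congrFun hc j
    have hd : Finsupp.single i 1 + (α - Finsupp.single i 1) = α := by
      ext j
      rw [Finsupp.add_apply, hval j]
      rcases eq_or_ne j i with rfl | hj
      · rw [Function.update_self, Finsupp.single_eq_same]
        omega
      · rw [Function.update_of_ne hj, Finsupp.single_apply, if_neg (Ne.symm hj), Nat.zero_add]
    refine ⟨hc, hd, ?_⟩
    have h2 : ((Finsupp.single i 1 + (α - Finsupp.single i 1)).sum fun _ e => e)
        = (Finsupp.single i 1).sum (fun _ e => e) + ((α - Finsupp.single i 1).sum fun _ e => e) :=
      Finsupp.sum_add_index' (fun _ => rfl) (fun _ _ _ => rfl)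
    rw [hd, Finsupp.sum_single_index rfl] at h2
    omega
  have hXmul : ∀ (α : Fin n →₀ ℕ) (i : Fin n), α i ≠ 0 →
      X i * monomial (α - Finsupp.single i 1) (1:ℝ) = monomial α 1 := by
    intro α i hi
    rw [X, monomial_mul, one_mul, (hstrip α i hi).2.1]
  -- the strong monomial lemma
  have monStrong : ∀ k : ℕ, ∀ α : Fin n →₀ ℕ, (α.sum fun _ e => e) = k → k ≤ d →
      ∀ hm : (monomial α (1:ℝ)) ∈ restrictTotalDegree (Fin n) ℝ d,
      (((List.ofFn fun i : Fin n => M i ^ α i).prod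
          ⟨((U.comap (restrictTotalDegree (Fin n) ℝ (d + 1)).subtype).mkQ ∘ₗ Submodule.inclusion hAB) ⟨1, h1⟩, ⟨⟨1, h1⟩, rfl⟩⟩ :
          ↥(LinearMap.range ((U.comap (restrictTotalDegree (Fin n) ℝ (d + 1)).subtype).mkQ ∘ₗ Submodule.inclusion hAB))) :
        ↥(restrictTotalDegree (Fin n) ℝ (d + 1)) ⧸ (U.comap (restrictTotalDegree (Fin n) ℝ (d + 1)).subtype))
        = ((U.comap (restrictTotalDegree (Fin n) ℝ (d + 1)).subtype).mkQ ∘ₗ Submodule.inclusion hAB) ⟨monomial α 1, hm⟩ := by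
    intro k
    induction k with
    | zero =>
      intro α hα _ hm
      have hall : ∀ i, α i = 0 := by
        intro i
        by_contra hi
        have hmem : i ∈ α.support := Finsupp.mem_support_iff.mpr hi
        have hle : α i ≤ α.sum fun _ e => e :=
          Finset.single_le_sum (f := fun j => α j) (fun _ _ => Nat.zero_le _) hmem
        omega
      have hα0 : α = 0 := Finsupp.ext fun i => hall i
      subst hα0
      simp only [Finsupp.coe_zero, Pi.zero_apply, pow_zero]
      rw [List.ofFn_const, List.prod_replicate, one_pow]
      show ((U.comap (restrictTotalDegree (Fin n) ℝ (d + 1)).subtype).mkQ ∘ₗ Submodule.inclusion hAB) ⟨1, h1⟩ = ((U.comap (restrictTotalDegree (Fin n) ℝ (d + 1)).subtype).mkQ ∘ₗ Submodule.inclusion hAB) ⟨monomial 0 1, hm⟩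
      congr 1
    | succ k ih =>
      intro α hα hk hm
      have hne : ∃ i, α i ≠ 0 := by
        by_contra hno
        push_neg at hno
        have hα0 : α = 0 := Finsupp.ext fun i => hno i
        subst hα0
        simp [Finsupp.sum_zero_index] at hα
      obtain ⟨i, hi⟩ := hne
      obtain ⟨hc, hd, hsum⟩ := hstrip α i hi
      have hsum' : ((α - Finsupp.single i 1).sum fun _ e => e) = k := by omega
      have hm' : (monomial (α - Finsupp.single i 1) (1:ℝ)) ∈ restrictTotalDegree (Fin n) ℝ d :=
        hmemA _ (by omega)
      have hfac := aux_factor M (fun a b => hcomm a b) ⇑α i hi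
      rw [← hc] at hfac
      have hIH := ih (α - Finsupp.single i 1) hsum' (by omega) hm'
      have hsub : ((List.ofFn fun j => M j ^ ((α - Finsupp.single i 1 : Fin n →₀ ℕ) j)).prod
            ⟨((U.comap (restrictTotalDegree (Fin n) ℝ (d + 1)).subtype).mkQ ∘ₗ Submodule.inclusion hAB) ⟨1, h1⟩, ⟨⟨1, h1⟩, rfl⟩⟩ :
            ↥(LinearMap.range ((U.comap (restrictTotalDegree (Fin n) ℝ (d + 1)).subtype).mkQ ∘ₗ Submodule.inclusion hAB)))
          = ⟨((U.comap (restrictTotalDegree (Fin n) ℝ (d + 1)).subtype).mkQ ∘ₗ Submodule.inclusion hAB) ⟨monomial (α - Finsupp.single i 1) 1, hm'⟩,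
              ⟨⟨monomial (α - Finsupp.single i 1) 1, hm'⟩, rfl⟩⟩ := Subtype.ext hIH
      rw [hfac, Module.End.mul_apply, hsub]
      obtain ⟨r, hr⟩ := (M i ⟨((U.comap (restrictTotalDegree (Fin n) ℝ (d + 1)).subtype).mkQ ∘ₗ Submodule.inclusion hAB) ⟨monomial (α - Finsupp.single i 1) 1, hm'⟩,
          ⟨⟨monomial (α - Finsupp.single i 1) 1, hm'⟩, rfl⟩⟩).2
      rw [← hr]
      have hz : ((U.comap (restrictTotalDegree (Fin n) ℝ (d + 1)).subtype).mkQ ∘ₗ Submodule.inclusion hAB) (r - ⟨monomial α 1, hm⟩) = 0 := by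
        apply radical
        intro q
        have e2 : (((r - ⟨monomial α 1, hm⟩ : ↥(restrictTotalDegree (Fin n) ℝ d))) :
            MvPolynomial (Fin n) ℝ) = (r : MvPolynomial (Fin n) ℝ) - monomial α 1 := rfl
        rw [e2, sub_mul, map_sub]
        have h3 : L ((r : MvPolynomial (Fin n) ℝ) * (q : MvPolynomial (Fin n) ℝ))
            = L (X i * monomial (α - Finsupp.single i 1) 1 * (q : MvPolynomial (Fin n) ℝ)) := by
          calc L ((r : MvPolynomial (Fin n) ℝ) * (q : MvPolynomial (Fin n) ℝ)) = β (((U.comap (restrictTotalDegree (Fin n) ℝ (d + 1)).subtype).mkQ ∘ₗ Submodule.inclusion hAB) r) (((U.comap (restrictTotalDegree (Fin n) ℝ (d + 1)).subtype).mkQ ∘ₗ Submodule.inclusion hAB) q) := (hβQ _ _).symm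
            _ = β (↑(M i ⟨((U.comap (restrictTotalDegree (Fin n) ℝ (d + 1)).subtype).mkQ ∘ₗ Submodule.inclusion hAB) ⟨monomial (α - Finsupp.single i 1) 1, hm'⟩,
                  ⟨⟨monomial (α - Finsupp.single i 1) 1, hm'⟩, rfl⟩⟩)) (((U.comap (restrictTotalDegree (Fin n) ℝ (d + 1)).subtype).mkQ ∘ₗ Submodule.inclusion hAB) q) := by rw [hr]
            _ = L (X i * monomial (α - Finsupp.single i 1) 1 * (q : MvPolynomial (Fin n) ℝ)) :=
                hM i ⟨monomial (α - Finsupp.single i 1) 1, hm'⟩ q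
        rw [h3, hXmul α i hi]
        exact sub_self _
      rw [map_sub, sub_eq_zero] at hz
      exact hz
  -- the key inner-product lemma for monomials up to degree d+1
  have monKey : ∀ α : Fin n →₀ ℕ, (α.sum fun _ e => e) ≤ d + 1 →
      ∀ q : ↥(restrictTotalDegree (Fin n) ℝ d),
      β (((List.ofFn fun i : Fin n => M i ^ α i).prod
          ⟨((U.comap (restrictTotalDegree (Fin n) ℝ (d + 1)).subtype).mkQ ∘ₗ Submodule.inclusion hAB) ⟨1, h1⟩, ⟨⟨1, h1⟩, rfl⟩⟩ :
          ↥(LinearMap.range ((U.comap (restrictTotalDegree (Fin n) ℝ (d + 1)).subtype).mkQ ∘ₗ Submodule.inclusion hAB))) :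
        ↥(restrictTotalDegree (Fin n) ℝ (d + 1)) ⧸ (U.comap (restrictTotalDegree (Fin n) ℝ (d + 1)).subtype)) (((U.comap (restrictTotalDegree (Fin n) ℝ (d + 1)).subtype).mkQ ∘ₗ Submodule.inclusion hAB) q)
        = L (monomial α 1 * (q : MvPolynomial (Fin n) ℝ)) := by
    intro α hα q
    by_cases h0 : ∃ i, α i ≠ 0
    · obtain ⟨i, hi⟩ := h0
      obtain ⟨hc, hd, hsum⟩ := hstrip α i hi
      have hm' : (monomial (α - Finsupp.single i 1) (1:ℝ)) ∈ restrictTotalDegree (Fin n) ℝ d :=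
        hmemA _ (by omega)
      have hfac := aux_factor M (fun a b => hcomm a b) ⇑α i hi
      rw [← hc] at hfac
      have hIH := monStrong ((α - Finsupp.single i 1).sum fun _ e => e)
        (α - Finsupp.single i 1) rfl (by omega) hm'
      have hsub : ((List.ofFn fun j => M j ^ ((α - Finsupp.single i 1 : Fin n →₀ ℕ) j)).prod
            ⟨((U.comap (restrictTotalDegree (Fin n) ℝ (d + 1)).subtype).mkQ ∘ₗ Submodule.inclusion hAB) ⟨1, h1⟩, ⟨⟨1, h1⟩, rfl⟩⟩ :
            ↥(LinearMap.range ((U.comap (restrictTotalDegree (Fin n) ℝ (d + 1)).subtype).mkQ ∘ₗ Submodule.inclusion hAB)))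
          = ⟨((U.comap (restrictTotalDegree (Fin n) ℝ (d + 1)).subtype).mkQ ∘ₗ Submodule.inclusion hAB) ⟨monomial (α - Finsupp.single i 1) 1, hm'⟩,
              ⟨⟨monomial (α - Finsupp.single i 1) 1, hm'⟩, rfl⟩⟩ := Subtype.ext hIH
      rw [hfac, Module.End.mul_apply, hsub,
        hM i ⟨monomial (α - Finsupp.single i 1) 1, hm'⟩ q]
      rw [← hXmul α i hi]
    · push_neg at h0
      have hα0 : α = 0 := Finsupp.ext fun i => h0 i
      subst hα0
      simp only [Finsupp.coe_zero, Pi.zero_apply, pow_zero]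
      rw [List.ofFn_const, List.prod_replicate, one_pow]
      show β (((U.comap (restrictTotalDegree (Fin n) ℝ (d + 1)).subtype).mkQ ∘ₗ Submodule.inclusion hAB) ⟨1, h1⟩) (((U.comap (restrictTotalDegree (Fin n) ℝ (d + 1)).subtype).mkQ ∘ₗ Submodule.inclusion hAB) q) = L (monomial 0 1 * (q : MvPolynomial (Fin n) ℝ))
      rw [hβQ]
      norm_num
  -- final assembly
  intro p
  obtain ⟨r, hr⟩ := ((∑ α ∈ (p : MvPolynomial (Fin n) ℝ).support,
      (p : MvPolynomial (Fin n) ℝ).coeff α •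
        (List.ofFn fun i : Fin n => M i ^ α i).prod)
      ⟨((U.comap (restrictTotalDegree (Fin n) ℝ (d + 1)).subtype).mkQ ∘ₗ Submodule.inclusion hAB) ⟨1, h1⟩, ⟨⟨1, h1⟩, rfl⟩⟩ :
      ↥(LinearMap.range ((U.comap (restrictTotalDegree (Fin n) ℝ (d + 1)).subtype).mkQ ∘ₗ Submodule.inclusion hAB))).2
  rw [← hr]
  apply unique
  intro q
  rw [hβeq, map_sub, LinearMap.sub_apply]
  have hBp : auxB2 L U hvan ((U.comap (restrictTotalDegree (Fin n) ℝ (d + 1)).subtype).mkQ p) (((U.comap (restrictTotalDegree (Fin n) ℝ (d + 1)).subtype).mkQ ∘ₗ Submodule.inclusion hAB) q)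
      = L ((p : MvPolynomial (Fin n) ℝ) * (q : MvPolynomial (Fin n) ℝ)) :=
    auxB2_apply L U hvan p (Submodule.inclusion hAB q)
  have hcoeS : (((∑ α ∈ (p : MvPolynomial (Fin n) ℝ).support,
        (p : MvPolynomial (Fin n) ℝ).coeff α •
          (List.ofFn fun i : Fin n => M i ^ α i).prod)
        ⟨((U.comap (restrictTotalDegree (Fin n) ℝ (d + 1)).subtype).mkQ ∘ₗ Submodule.inclusion hAB) ⟨1, h1⟩, ⟨⟨1, h1⟩, rfl⟩⟩ :
        ↥(LinearMap.range ((U.comap (restrictTotalDegree (Fin n) ℝ (d + 1)).subtype).mkQ ∘ₗ Submodule.inclusion hAB))) :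
      ↥(restrictTotalDegree (Fin n) ℝ (d + 1)) ⧸ (U.comap (restrictTotalDegree (Fin n) ℝ (d + 1)).subtype))
      = ∑ α ∈ (p : MvPolynomial (Fin n) ℝ).support,
          (p : MvPolynomial (Fin n) ℝ).coeff α •
            (((List.ofFn fun i : Fin n => M i ^ α i).prod
              ⟨((U.comap (restrictTotalDegree (Fin n) ℝ (d + 1)).subtype).mkQ ∘ₗ Submodule.inclusion hAB) ⟨1, h1⟩, ⟨⟨1, h1⟩, rfl⟩⟩ :
              ↥(LinearMap.range ((U.comap (restrictTotalDegree (Fin n) ℝ (d + 1)).subtype).mkQ ∘ₗ Submodule.inclusion hAB))) :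
            ↥(restrictTotalDegree (Fin n) ℝ (d + 1)) ⧸ (U.comap (restrictTotalDegree (Fin n) ℝ (d + 1)).subtype)) := by
    rw [LinearMap.sum_apply, AddSubmonoidClass.coe_finset_sum]
    exact Finset.sum_congr rfl fun α _ => by rw [LinearMap.smul_apply]; rfl
  have hBr : auxB2 L U hvan (((U.comap (restrictTotalDegree (Fin n) ℝ (d + 1)).subtype).mkQ ∘ₗ Submodule.inclusion hAB) r) (((U.comap (restrictTotalDegree (Fin n) ℝ (d + 1)).subtype).mkQ ∘ₗ Submodule.inclusion hAB) q)
      = L ((p : MvPolynomial (Fin n) ℝ) * (q : MvPolynomial (Fin n) ℝ)) := by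
    rw [hr, hcoeS, map_sum, LinearMap.sum_apply]
    have hterm : ∀ α ∈ (p : MvPolynomial (Fin n) ℝ).support,
        auxB2 L U hvan ((p : MvPolynomial (Fin n) ℝ).coeff α •
          (((List.ofFn fun i : Fin n => M i ^ α i).prod
            ⟨((U.comap (restrictTotalDegree (Fin n) ℝ (d + 1)).subtype).mkQ ∘ₗ Submodule.inclusion hAB) ⟨1, h1⟩, ⟨⟨1, h1⟩, rfl⟩⟩ :
            ↥(LinearMap.range ((U.comap (restrictTotalDegree (Fin n) ℝ (d + 1)).subtype).mkQ ∘ₗ Submodule.inclusion hAB))) :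
          ↥(restrictTotalDegree (Fin n) ℝ (d + 1)) ⧸ (U.comap (restrictTotalDegree (Fin n) ℝ (d + 1)).subtype))) (((U.comap (restrictTotalDegree (Fin n) ℝ (d + 1)).subtype).mkQ ∘ₗ Submodule.inclusion hAB) q)
        = L (monomial α ((p : MvPolynomial (Fin n) ℝ).coeff α) * (q : MvPolynomial (Fin n) ℝ)) := by
      intro α hαs
      have hdeg : (α.sum fun _ e => e) ≤ d + 1 :=
        le_trans (MvPolynomial.le_totalDegree hαs) (hdegB p)
      rw [map_smul, LinearMap.smul_apply, smul_eq_mul, ← hβeq, monKey α hdeg q]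
      rw [← smul_eq_mul, ← map_smul, ← smul_mul_assoc, smul_monomial, smul_eq_mul, mul_one]
    rw [Finset.sum_congr rfl hterm, ← map_sum, ← Finset.sum_mul, ← as_sum]
  rw [hBp, hBr, sub_self]
end

section
/- Assume the truncated GNS multiplication operators of L pairwise commute. Then there exist pairwise distinct points a₁,…,a_N ∈ ℝⁿ and weights λ₁,…,λ_N > 0 with N = dim(T_L) such that L(pq) = Σⱼ₌₁^N λⱼ p(aⱼ) q(aⱼ) for all p ∈ ℝ[X]_{d+1} and all q ∈ ℝ[X]_d + U_L. In particular L admits a Gaussian quadrature rule, i.e. a quadrature rule on ℝ[X]_{2d+1} with the minimal number dim(T_L) of nodes. -/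
open MvPolynomial

private lemma aux_quad {a b : ℝ} (ha : 0 ≤ a) (h : ∀ t : ℝ, 0 ≤ t ^ 2 * a + 2 * t * b) :
    b = 0 := by
  have h1 : (0:ℝ) < a + 1 := by linarith
  have ht := h (-(b / (a + 1)))
  have h2 : (0:ℝ) < (a + 1)^2 := by positivity
  rw [div_eq_mul_inv] at ht
  have h3 := mul_nonneg h2.le ht
  have h4 : (a+1)^2 * ((-(b * (a + 1)⁻¹)) ^ 2 * a + 2 * -(b * (a + 1)⁻¹) * b)
      = b^2*a - 2*b^2*(a+1) := by
    field_simp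
    ring
  rw [h4] at h3
  have h5 : b ^ 2 = 0 := le_antisymm (by nlinarith) (sq_nonneg b)
  exact sq_eq_zero_iff.mp h5

private lemma aux_exists_le_deg {n : ℕ} (α : Fin n →₀ ℕ) (m : ℕ) (hm : m ≤ ∑ i, α i) :
    ∃ γ : Fin n →₀ ℕ, γ ≤ α ∧ ∑ i, γ i = m := by
  induction m with
  | zero => exact ⟨0, zero_le, by simp⟩
  | succ k ih =>
    obtain ⟨γ, hγle, hγd⟩ := ih (le_of_lt (Nat.lt_of_succ_le hm))
    have hlt : ∃ i, γ i < α i := by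
      by_contra hcon
      push_neg at hcon
      have : ∑ i, α i ≤ ∑ i, γ i := Finset.sum_le_sum fun i _ => hcon i
      omega
    obtain ⟨i, hi⟩ := hlt
    refine ⟨γ + Finsupp.single i 1, ?_, ?_⟩
    · rw [Finsupp.le_def]
      intro k
      rcases eq_or_ne k i with rfl | hk
      · simp only [Finsupp.add_apply, Finsupp.single_eq_same]
        omega
      · simp only [Finsupp.add_apply, Finsupp.single_eq_of_ne' (Ne.symm hk), add_zero]
        exact Finsupp.le_def.mp hγle k
    · simp only [Finsupp.add_apply, Finset.sum_add_distrib, hγd]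
      rw [Finset.sum_eq_single i (fun b _ hb => Finsupp.single_eq_of_ne' (Ne.symm hb))
        (fun h => absurd (Finset.mem_univ i) h)]
      simp

set_option maxHeartbeats 4000000 in
set_option synthInstance.maxHeartbeats 400000 in
private theorem aux_main {n d : ℕ} (L : MvPolynomial (Fin n) ℝ →ₗ[ℝ] ℝ)
    (hL : ∀ p : MvPolynomial (Fin n) ℝ, p.totalDegree ≤ d + 1 → 0 ≤ L (p ^ 2))
    (U : Submodule ℝ (MvPolynomial (Fin n) ℝ))
    (hU : ∀ p : MvPolynomial (Fin n) ℝ, p ∈ U ↔ (p.totalDegree ≤ d + 1 ∧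
      ∀ q : MvPolynomial (Fin n) ℝ, q.totalDegree ≤ d + 1 → L (p * q) = 0))
    (R0 R1 : Submodule ℝ (MvPolynomial (Fin n) ℝ))
    (hR0mem : ∀ p, p ∈ R0 ↔ p.totalDegree ≤ d)
    (hR1 : R1 = restrictTotalDegree (Fin n) ℝ (d + 1))
    (hR1mem : ∀ p, p ∈ R1 ↔ p.totalDegree ≤ d + 1)
    (hAB : R0 ≤ R1)
    {V : Type} [AddCommGroup V] [Module ℝ V]
    (π : ↥R1 →ₗ[ℝ] V) (hπsurj : Function.Surjective π)
    (hπker : ∀ p : ↥R1, π p = 0 ↔ (p : MvPolynomial (Fin n) ℝ) ∈ U)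
    (β : V → V → ℝ)
    (hβ : ∀ p q : ↥R1, β (π p) (π q) =
      L ((p : MvPolynomial (Fin n) ℝ) * (q : MvPolynomial (Fin n) ℝ)))
    (φ : ↥R0 →ₗ[ℝ] V) (hφ : φ = π ∘ₗ Submodule.inclusion hAB)
    (M : Fin n → Module.End ℝ ↥(LinearMap.range φ))
    (hM : ∀ (i : Fin n) (p q : ↥R0),
      β ↑(M i ⟨φ p, ⟨p, rfl⟩⟩) (φ q) =
      L (X i * (p : MvPolynomial (Fin n) ℝ) * (q : MvPolynomial (Fin n) ℝ)))
    (hcomm : ∀ i j : Fin n, M i * M j = M j * M i) :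
    ∃ a : Fin (Module.finrank ℝ ↥(LinearMap.range φ)) → (Fin n → ℝ),
      Function.Injective a ∧
      ∃ lam : Fin (Module.finrank ℝ ↥(LinearMap.range φ)) → ℝ,
        (∀ j, 0 < lam j) ∧
        (∀ p q : MvPolynomial (Fin n) ℝ, p.totalDegree ≤ d + 1 → q ∈ R0 ⊔ U →
          L (p * q) = ∑ j, lam j * (MvPolynomial.eval (a j) p * MvPolynomial.eval (a j) q)) ∧
        (∀ r : MvPolynomial (Fin n) ℝ, r.totalDegree ≤ 2 * d + 1 →
          L r = ∑ j, lam j * MvPolynomial.eval (a j) r) := by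
  classical
  have hdeg1 : ∀ p : R1, (p : MvPolynomial (Fin n) ℝ).totalDegree ≤ d + 1 := fun p =>
    (hR1mem _).mp p.2
  have hdeg0 : ∀ p : R0, (p : MvPolynomial (Fin n) ℝ).totalDegree ≤ d := fun p =>
    (hR0mem _).mp p.2
  -- Cauchy-Schwarz style consequence of positivity
  have hCS : ∀ p q : MvPolynomial (Fin n) ℝ, p.totalDegree ≤ d + 1 → q.totalDegree ≤ d + 1 →
      L (p * p) = 0 → L (p * q) = 0 := by
    intro p q hp hq hpp
    have hqq : 0 ≤ L (q * q) := by rw [← pow_two]; exact hL q hq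
    refine aux_quad hqq ?_
    intro t
    have hdeg : (p + t • q).totalDegree ≤ d + 1 :=
      le_trans (totalDegree_add _ _) (max_le hp (le_trans (totalDegree_smul_le t q) hq))
    have h0 := hL _ hdeg
    have hexp : (p + t • q) ^ 2 = p * p + t • (p * q) + t • (p * q) + (t * t) • (q * q) := by
      simp only [smul_eq_C_mul, C_mul]
      ring
    rw [hexp] at h0
    simp only [map_add, map_smul, smul_eq_mul] at h0
    rw [hpp] at h0
    rw [pow_two]
    linarith
  -- symmetry of β
  have hβsymm : ∀ x y : V, β x y = β y x := by
    intro x y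
    obtain ⟨p, rfl⟩ := hπsurj x
    obtain ⟨q, rfl⟩ := hπsurj y
    rw [hβ, hβ, mul_comm]
  -- the inner product space structure on V
  letI core : InnerProductSpace.Core ℝ V :=
  { inner := β
    conj_inner_symm := by
      intro x y
      show starRingEnd ℝ (β y x) = β x y
      rw [starRingEnd_apply, star_trivial, hβsymm]
    re_inner_nonneg := by
      intro x
      show 0 ≤ β x x
      obtain ⟨p, rfl⟩ := hπsurj x
      rw [hβ, ← pow_two]
      exact hL _ (hdeg1 p)
    add_left := by
      intro x y z
      show β (x + y) z = β x z + β y z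
      obtain ⟨p, rfl⟩ := hπsurj x
      obtain ⟨q, rfl⟩ := hπsurj y
      obtain ⟨s, rfl⟩ := hπsurj z
      rw [← map_add, hβ, hβ, hβ]
      push_cast
      rw [add_mul, map_add]
    smul_left := by
      intro x y t
      show β (t • x) y = starRingEnd ℝ t * β x y
      obtain ⟨p, rfl⟩ := hπsurj x
      obtain ⟨q, rfl⟩ := hπsurj y
      rw [← map_smul, hβ, hβ, starRingEnd_apply, star_trivial]
      push_cast
      rw [smul_mul_assoc, map_smul, smul_eq_mul]
    definite := by
      intro x hx
      obtain ⟨p, rfl⟩ := hπsurj x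
      have hx' : β (π p) (π p) = 0 := hx
      rw [hβ] at hx'
      rw [hπker]
      refine (hU _).mpr ⟨hdeg1 p, ?_⟩
      intro q hq
      exact hCS _ _ (hdeg1 p) hq hx' }
  letI : NormedAddCommGroup V := core.toNormedAddCommGroup
  letI : InnerProductSpace ℝ V := InnerProductSpace.ofCore core.toCore
  have hβi : ∀ x y : V, @inner ℝ V _ x y = β x y := fun _ _ => rfl
  haveI : FiniteDimensional ℝ ↥R1 := by rw [hR1]; infer_instance
  haveI : FiniteDimensional ℝ V := Module.Finite.of_surjective π hπsurj
  haveI : FiniteDimensional ℝ ↥(LinearMap.range φ) := inferInstance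
  have innT : ∀ x y : ↥(LinearMap.range φ), @inner ℝ _ _ x y = β ↑x ↑y := fun _ _ => rfl
  -- surjectivity onto T
  have hsurjT : ∀ x : ↥(LinearMap.range φ),
      ∃ p : ↥R0, (⟨φ p, ⟨p, rfl⟩⟩ : ↥(LinearMap.range φ)) = x := by
    intro x
    obtain ⟨p, hp⟩ := LinearMap.mem_range.mp x.2
    exact ⟨p, Subtype.ext hp⟩
  have hβφ : ∀ (p : ↥R1) (q : ↥R0), β (π p) (φ q) =
      L ((p : MvPolynomial (Fin n) ℝ) * (q : MvPolynomial (Fin n) ℝ)) := by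
    intro p q
    rw [hφ]
    simpa using hβ p (Submodule.inclusion hAB q)
  have hφφ : ∀ (p q : ↥R0), β (φ p) (φ q) =
      L ((p : MvPolynomial (Fin n) ℝ) * (q : MvPolynomial (Fin n) ℝ)) := by
    intro p q
    rw [hφ]
    simpa using hβ (Submodule.inclusion hAB p) (Submodule.inclusion hAB q)
  -- symmetry of the operators
  have hsym : ∀ i, (M i).IsSymmetric := by
    intro i x y
    obtain ⟨p, rfl⟩ := hsurjT x
    obtain ⟨q, rfl⟩ := hsurjT y
    rw [innT, innT]
    have h1 : ((⟨φ q, ⟨q, rfl⟩⟩ : ↥(LinearMap.range φ)) : V) = φ q := rfl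
    have h2 : ((⟨φ p, ⟨p, rfl⟩⟩ : ↥(LinearMap.range φ)) : V) = φ p := rfl
    rw [h1, h2, hM i p q, hβsymm, hM i q p]
    congr 1
    ring
  have hcomm' : Pairwise (Function.onFun Commute M) := fun i j _ => hcomm i j
  have internal :=
    LinearMap.IsSymmetric.LinearMap.IsSymmetric.directSum_isInternal_of_pairwise_commute hsym hcomm'
  have horth := LinearMap.IsSymmetric.orthogonalFamily_iInf_eigenspaces hsym
  set W : (Fin n → ℝ) → Submodule ℝ ↥(LinearMap.range φ) :=
    fun χ => ⨅ i, Module.End.eigenspace (M i) (χ i) with hW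
  have indep : iSupIndep W := horth.independent
  letI : Fintype {χ : Fin n → ℝ // W χ ≠ ⊥} := indep.fintypeNeBotOfFiniteDimensional
  have internal₀ : DirectSum.IsInternal (fun χ : {χ : Fin n → ℝ // W χ ≠ ⊥} => W ↑χ) :=
    DirectSum.isInternal_ne_bot_iff.mpr internal
  have horth₀ : OrthogonalFamily ℝ (fun χ : {χ : Fin n → ℝ // W χ ≠ ⊥} => ↥(W ↑χ))
      (fun χ => (W ↑χ).subtypeₗᵢ) :=
    fun i j hij a b => horth (fun h => hij (Subtype.ext h)) a b
  obtain ⟨v, ev, hsub⟩ :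
      ∃ (v : OrthonormalBasis (Fin (Module.finrank ℝ ↥(LinearMap.range φ))) ℝ
          ↥(LinearMap.range φ))
        (ev : Fin (Module.finrank ℝ ↥(LinearMap.range φ)) → (Fin n → ℝ)),
        ∀ j, v j ∈ ⨅ i, Module.End.eigenspace (M i) (ev j i) :=
    ⟨internal₀.subordinateOrthonormalBasis rfl horth₀,
      fun j => ↑(internal₀.subordinateOrthonormalBasisIndex rfl j horth₀),
      fun j => internal₀.subordinateOrthonormalBasis_subordinate rfl j horth₀⟩
  have heig : ∀ j i, M i (v j) = ev j i • v j := fun j i =>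
    Module.End.mem_eigenspace_iff.mp ((Submodule.mem_iInf _).mp (hsub j) i)
  have hvv := orthonormal_iff_ite.mp v.orthonormal
  -- representatives
  have hrep : ∀ j, ∃ p : ↥R0, φ p = ↑(v j) := fun j => LinearMap.mem_range.mp (v j).2
  choose r hr using hrep
  -- key monomial computation
  have keymono : ∀ (k : ℕ), ∀ α : Fin n →₀ ℕ, (α.sum fun _ e => e) = k → k ≤ d + 1 →
      ∀ j, L (monomial α 1 * ((r j : ↥R0) : MvPolynomial (Fin n) ℝ)) =
        eval (ev j) (monomial α 1) * L ((r j : ↥R0) : MvPolynomial (Fin n) ℝ) := by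
    intro k
    induction k with
    | zero =>
      intro α hα _ j
      have hα0 : α = 0 := by
        ext i
        by_contra hi
        have hmem : i ∈ α.support := Finsupp.mem_support_iff.mpr hi
        have h1 : 0 < α.sum fun _ e => e :=
          Finset.sum_pos' (fun _ _ => Nat.zero_le _) ⟨i, hmem, Nat.pos_of_ne_zero hi⟩
        omega
      subst hα0
      simp [monomial_zero']
    | succ k ih =>
      intro α hα hk j
      have hne : ∃ i, α i ≠ 0 := by
        by_contra hcon
        push_neg at hcon
        have : α = 0 := Finsupp.ext fun i => hcon i
        rw [this] at hα
        simp at hα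
      obtain ⟨i, hi⟩ := hne
      have hsle : Finsupp.single i 1 ≤ α :=
        Finsupp.single_le_iff.mpr (Nat.one_le_iff_ne_zero.mpr hi)
      set α' := α - Finsupp.single i 1 with hα'def
      have hadd : Finsupp.single i 1 + α' = α := add_tsub_cancel_of_le hsle
      have hα'sum : (α'.sum fun _ e => e) = k := by
        have h1 : ((Finsupp.single i 1 + α').sum fun _ e => e) =
            ((Finsupp.single i 1).sum fun _ e => e) + (α'.sum fun _ e => e) :=
          Finsupp.sum_add_index' (fun _ => rfl) (fun _ _ _ => rfl)
        rw [hadd, hα] at h1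
        rw [Finsupp.sum_single_index rfl] at h1
        omega
      have hmono : (monomial α 1 : MvPolynomial (Fin n) ℝ) = X i * monomial α' 1 := by
        rw [← hadd, monomial_single_add, pow_one]
      have hα'mem : (monomial α' 1 : MvPolynomial (Fin n) ℝ) ∈ R0 := by
        rw [hR0mem, totalDegree_monomial _ one_ne_zero, hα'sum]
        omega
      have ihj := ih α' hα'sum (by omega) j
      calc L (monomial α 1 * ((r j : ↥R0) : MvPolynomial (Fin n) ℝ))
          = L (X i * (↑(⟨monomial α' 1, hα'mem⟩ : ↥R0) : MvPolynomial (Fin n) ℝ) *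
              ((r j : ↥R0) : MvPolynomial (Fin n) ℝ)) := by
            rw [hmono]
        _ = β ↑(M i ⟨φ ⟨monomial α' 1, hα'mem⟩, ⟨⟨monomial α' 1, hα'mem⟩, rfl⟩⟩)
              (φ (r j)) := (hM i ⟨monomial α' 1, hα'mem⟩ (r j)).symm
        _ = @inner ℝ _ _ (M i ⟨φ ⟨monomial α' 1, hα'mem⟩, ⟨⟨monomial α' 1, hα'mem⟩, rfl⟩⟩)
              (v j) := by rw [innT, hr j]
        _ = @inner ℝ _ _ ((⟨φ ⟨monomial α' 1, hα'mem⟩, ⟨⟨monomial α' 1, hα'mem⟩, rfl⟩⟩ :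
              ↥(LinearMap.range φ))) (M i (v j)) := hsym i _ _
        _ = ev j i * @inner ℝ _ _ ((⟨φ ⟨monomial α' 1, hα'mem⟩,
              ⟨⟨monomial α' 1, hα'mem⟩, rfl⟩⟩ : ↥(LinearMap.range φ))) (v j) := by
            rw [heig j i]; exact real_inner_smul_right (F := ↥(LinearMap.range φ)) _ _ _
        _ = ev j i * L (monomial α' 1 * ((r j : ↥R0) : MvPolynomial (Fin n) ℝ)) := by
            rw [innT, ← hr j]
            exact congrArg _ (hφφ ⟨monomial α' 1, hα'mem⟩ (r j))
        _ = ev j i * (eval (ev j) (monomial α' 1) *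
              L ((r j : ↥R0) : MvPolynomial (Fin n) ℝ)) := by rw [ihj]
        _ = eval (ev j) (monomial α 1) * L ((r j : ↥R0) : MvPolynomial (Fin n) ℝ) := by
            rw [hmono, map_mul, eval_X]
            ring
  -- linear extension
  have keyL : ∀ (j) (p : MvPolynomial (Fin n) ℝ), p.totalDegree ≤ d + 1 →
      L (p * ((r j : ↥R0) : MvPolynomial (Fin n) ℝ)) =
        eval (ev j) p * L ((r j : ↥R0) : MvPolynomial (Fin n) ℝ) := by
    intro j p hp
    conv_lhs => rw [p.as_sum]
    rw [Finset.sum_mul, map_sum]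
    conv_rhs => rw [p.as_sum]
    rw [map_sum, Finset.sum_mul]
    refine Finset.sum_congr rfl fun α hα => ?_
    have hc : (monomial α (coeff α p) : MvPolynomial (Fin n) ℝ) =
        C (coeff α p) * monomial α 1 := by
      rw [C_mul_monomial, mul_one]
    rw [hc, mul_assoc, ← smul_eq_C_mul, map_smul, smul_eq_mul,
      keymono _ α rfl (le_trans (le_totalDegree hα) hp) j, map_mul, eval_C]
    ring
  -- inner products of basis vectors in terms of L
  have hrr : ∀ j k, @inner ℝ _ _ (v j) (v k) =
      L (((r j : ↥R0) : MvPolynomial (Fin n) ℝ) * ((r k : ↥R0) : MvPolynomial (Fin n) ℝ)) := by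
    intro j k
    rw [innT, ← hr j, ← hr k]
    exact hφφ (r j) (r k)
  have hrjj : ∀ j, L (((r j : ↥R0) : MvPolynomial (Fin n) ℝ) *
      ((r j : ↥R0) : MvPolynomial (Fin n) ℝ)) = 1 := by
    intro j
    rw [← hrr j j, hvv j j, if_pos rfl]
  have hdrj : ∀ j, ((r j : ↥R0) : MvPolynomial (Fin n) ℝ).totalDegree ≤ d + 1 :=
    fun j => (hdeg0 (r j)).trans (by omega)
  -- the weights are nonzero
  have cne : ∀ j, L ((r j : ↥R0) : MvPolynomial (Fin n) ℝ) ≠ 0 := by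
    intro j hc0
    have h2 := keyL j ((r j : ↥R0) : MvPolynomial (Fin n) ℝ) (hdrj j)
    rw [hrjj j, hc0, mul_zero] at h2
    exact one_ne_zero h2
  -- injectivity of the points
  have hinj : Function.Injective ev := by
    intro j k hjk
    by_contra hne
    have h0 : L (((r j : ↥R0) : MvPolynomial (Fin n) ℝ) *
        ((r k : ↥R0) : MvPolynomial (Fin n) ℝ)) = 0 := by
      rw [← hrr j k, hvv j k, if_neg hne]
    have e1 := keyL k ((r j : ↥R0) : MvPolynomial (Fin n) ℝ) (hdrj j)
    rw [h0, ← hjk] at e1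
    have e2 := keyL j ((r j : ↥R0) : MvPolynomial (Fin n) ℝ) (hdrj j)
    rw [hrjj j] at e2
    rcases mul_eq_zero.mp e1.symm with h | h
    · rw [h, zero_mul] at e2
      exact one_ne_zero e2
    · exact cne k h
  -- elements of U vanish at the points
  have evalU : ∀ u ∈ U, ∀ j, eval (ev j) u = 0 := by
    intro u hu j
    have h0 : L (u * ((r j : ↥R0) : MvPolynomial (Fin n) ℝ)) = 0 :=
      ((hU u).mp hu).2 _ (hdrj j)
    have h1 := keyL j u ((hU u).mp hu).1
    rw [h0] at h1
    exact (mul_eq_zero.mp h1.symm).resolve_right (cne j)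
  -- the main quadrature formula
  have main2 : ∀ p q : MvPolynomial (Fin n) ℝ, p.totalDegree ≤ d + 1 → q ∈ R0 ⊔ U →
      L (p * q) = ∑ j, (L ((r j : ↥R0) : MvPolynomial (Fin n) ℝ))^2 *
        (eval (ev j) p * eval (ev j) q) := by
    intro p q hp hq
    obtain ⟨q₀, hq₀, u, hu, rfl⟩ := Submodule.mem_sup.mp hq
    have hpu : L (p * u) = 0 := by
      rw [mul_comm]
      exact ((hU u).mp hu).2 p hp
    have hmain : L (p * q₀) = ∑ j, (L ((r j : ↥R0) : MvPolynomial (Fin n) ℝ))^2 *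
        (eval (ev j) p * eval (ev j) q₀) := by
      have hx : L (p * q₀) = β (π ⟨p, (hR1mem p).mpr hp⟩) (φ ⟨q₀, hq₀⟩) :=
        (hβφ ⟨p, (hR1mem p).mpr hp⟩ ⟨q₀, hq₀⟩).symm
      have hxT : φ ⟨q₀, hq₀⟩ =
          ((⟨φ ⟨q₀, hq₀⟩, ⟨⟨q₀, hq₀⟩, rfl⟩⟩ : ↥(LinearMap.range φ)) : V) := rfl
      set x : ↥(LinearMap.range φ) := ⟨φ ⟨q₀, hq₀⟩, ⟨⟨q₀, hq₀⟩, rfl⟩⟩ with hxdef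
      have hxe : (x : V) = ∑ j, (@inner ℝ _ _ (v j) x : ℝ) • ((v j : V)) := by
        conv_lhs => rw [← v.sum_repr' x]
        push_cast
        rfl
      rw [hx, hxT, ← hβi, hxe, inner_sum]
      have hterm : ∀ j, @inner ℝ _ _ (π ⟨p, (hR1mem p).mpr hp⟩)
          ((@inner ℝ _ _ (v j) x : ℝ) • ((v j : V))) =
          (L ((r j : ↥R0) : MvPolynomial (Fin n) ℝ))^2 * (eval (ev j) p * eval (ev j) q₀) := by
        intro j
        rw [real_inner_smul_right]
        have h1 : @inner ℝ _ _ (π ⟨p, (hR1mem p).mpr hp⟩) ((v j : V)) =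
            eval (ev j) p * L ((r j : ↥R0) : MvPolynomial (Fin n) ℝ) := by
          rw [hβi, ← hr j, hβφ]
          exact keyL j p hp
        have h2 : (@inner ℝ _ _ (v j) x : ℝ) =
            eval (ev j) q₀ * L ((r j : ↥R0) : MvPolynomial (Fin n) ℝ) := by
          rw [innT, ← hr j, hφφ]
          rw [mul_comm ((r j : ↥R0) : MvPolynomial (Fin n) ℝ) q₀]
          exact keyL j q₀ ((hR0mem q₀).mp hq₀ |>.trans (by omega))
        rw [h1, h2]
        ring
      rw [Finset.sum_congr rfl fun j _ => hterm j]
    rw [mul_add, map_add, hpu, add_zero, hmain]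
    refine Finset.sum_congr rfl fun j _ => ?_
    rw [map_add, evalU u hu j, add_zero]
  -- the quadrature on degree 2d+1
  have main3 : ∀ s : MvPolynomial (Fin n) ℝ, s.totalDegree ≤ 2 * d + 1 →
      L s = ∑ j, (L ((r j : ↥R0) : MvPolynomial (Fin n) ℝ))^2 * eval (ev j) s := by
    intro s hs
    have hterm : ∀ α ∈ s.support, L (monomial α (coeff α s)) =
        ∑ j, (L ((r j : ↥R0) : MvPolynomial (Fin n) ℝ))^2 *
          eval (ev j) (monomial α (coeff α s)) := by
      intro α hα
      have hdα : (∑ i, α i) ≤ 2*d+1 := by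
        have := (le_totalDegree hα).trans hs
        rwa [Finsupp.sum_fintype _ _ (fun _ => rfl)] at this
      by_cases hsmall : (∑ i, α i) ≤ d + 1
      · have h1 : (1 : MvPolynomial (Fin n) ℝ) ∈ R0 ⊔ U :=
          Submodule.mem_sup_left ((hR0mem 1).mpr (by simp))
        have hdm : (monomial α (coeff α s)).totalDegree ≤ d + 1 := by
          rw [totalDegree_monomial _ (mem_support_iff.mp hα),
            Finsupp.sum_fintype _ _ (fun _ => rfl)]
          exact hsmall
        have := main2 (monomial α (coeff α s)) 1 hdm h1
        simpa using this
      · push_neg at hsmall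
        obtain ⟨γ, hγle, hγd⟩ := aux_exists_le_deg α (d+1) hsmall.le
        have hadd : γ + (α - γ) = α := add_tsub_cancel_of_le hγle
        have hdsub : (∑ i, (α - γ) i) ≤ d := by
          have hsum : ∑ i, γ i + ∑ i, (α - γ) i = ∑ i, α i := by
            rw [← Finset.sum_add_distrib]
            refine Finset.sum_congr rfl fun i _ => ?_
            have h := Finsupp.le_def.mp hγle i
            rw [Finsupp.tsub_apply]
            omega
          omega
        have hqmem : (monomial (α - γ) 1 : MvPolynomial (Fin n) ℝ) ∈ R0 ⊔ U := by
          refine Submodule.mem_sup_left ((hR0mem _).mpr ?_)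
          rw [totalDegree_monomial _ one_ne_zero, Finsupp.sum_fintype _ _ (fun _ => rfl)]
          exact hdsub
        have hpdeg : (monomial γ (coeff α s) : MvPolynomial (Fin n) ℝ).totalDegree ≤ d + 1 := by
          rw [totalDegree_monomial _ (mem_support_iff.mp hα),
            Finsupp.sum_fintype _ _ (fun _ => rfl), hγd]
        have hmul : (monomial α (coeff α s) : MvPolynomial (Fin n) ℝ) =
            monomial γ (coeff α s) * monomial (α - γ) 1 := by
          rw [monomial_mul, mul_one, hadd]
        rw [hmul, main2 _ _ hpdeg hqmem]
        refine Finset.sum_congr rfl fun j _ => ?_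
        rw [← map_mul]
    calc L s = ∑ α ∈ s.support, L (monomial α (coeff α s)) := by
          conv_lhs => rw [s.as_sum]
          rw [map_sum]
      _ = ∑ α ∈ s.support, ∑ j, (L ((r j : ↥R0) : MvPolynomial (Fin n) ℝ))^2 *
            eval (ev j) (monomial α (coeff α s)) := Finset.sum_congr rfl hterm
      _ = ∑ j, ∑ α ∈ s.support, (L ((r j : ↥R0) : MvPolynomial (Fin n) ℝ))^2 *
            eval (ev j) (monomial α (coeff α s)) := Finset.sum_comm
      _ = ∑ j, (L ((r j : ↥R0) : MvPolynomial (Fin n) ℝ))^2 * eval (ev j) s := by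
          refine Finset.sum_congr rfl fun j _ => ?_
          rw [← Finset.mul_sum]
          congr 1
          conv_rhs => rw [s.as_sum]
          rw [map_sum]
  exact ⟨ev, hinj, fun j => (L ((r j : ↥R0) : MvPolynomial (Fin n) ℝ))^2,
    fun j => lt_of_le_of_ne (sq_nonneg _) (Ne.symm (pow_ne_zero 2 (cne j))),
    main2, main3⟩

/-- If the truncated GNS multiplication operators of `L` pairwise commute, then there exist
`N = dim T_L` pairwise distinct points `a₁,…,a_N ∈ ℝⁿ` and weights `λⱼ > 0` with
`L(pq) = Σⱼ λⱼ p(aⱼ) q(aⱼ)` for all `p ∈ ℝ[X]_{d+1}` and `q ∈ ℝ[X]_d + U_L`; in particular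
`L` admits a Gaussian quadrature rule (a quadrature rule on `ℝ[X]_{2d+1}` with `dim T_L`
nodes). -/
theorem commuting_operators_quadrature {n d : ℕ}
    (L : MvPolynomial (Fin n) ℝ →ₗ[ℝ] ℝ)
    (hL : ∀ p : MvPolynomial (Fin n) ℝ, p.totalDegree ≤ d + 1 → 0 ≤ L (p ^ 2))
    (U : Submodule ℝ (MvPolynomial (Fin n) ℝ))
    (hU : ∀ p : MvPolynomial (Fin n) ℝ, p ∈ U ↔ (p.totalDegree ≤ d + 1 ∧
      ∀ q : MvPolynomial (Fin n) ℝ, q.totalDegree ≤ d + 1 → L (p * q) = 0))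
    (hAB : restrictTotalDegree (Fin n) ℝ d ≤ restrictTotalDegree (Fin n) ℝ (d + 1))
    (β : (↥(restrictTotalDegree (Fin n) ℝ (d + 1)) ⧸
        U.comap (restrictTotalDegree (Fin n) ℝ (d + 1)).subtype) →
      (↥(restrictTotalDegree (Fin n) ℝ (d + 1)) ⧸
        U.comap (restrictTotalDegree (Fin n) ℝ (d + 1)).subtype) → ℝ)
    (hβ : ∀ p q : ↥(restrictTotalDegree (Fin n) ℝ (d + 1)),
      β ((U.comap (restrictTotalDegree (Fin n) ℝ (d + 1)).subtype).mkQ p)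
        ((U.comap (restrictTotalDegree (Fin n) ℝ (d + 1)).subtype).mkQ q) =
      L ((p : MvPolynomial (Fin n) ℝ) * (q : MvPolynomial (Fin n) ℝ)))
    (M : Fin n → Module.End ℝ
      ↥(LinearMap.range ((U.comap (restrictTotalDegree (Fin n) ℝ (d + 1)).subtype).mkQ ∘ₗ
        Submodule.inclusion hAB)))
    (hM : ∀ (i : Fin n) (p q : ↥(restrictTotalDegree (Fin n) ℝ d)),
      β (M i ⟨((U.comap (restrictTotalDegree (Fin n) ℝ (d + 1)).subtype).mkQ ∘ₗ
            Submodule.inclusion hAB) p, ⟨p, rfl⟩⟩ :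
          ↥(restrictTotalDegree (Fin n) ℝ (d + 1)) ⧸
            U.comap (restrictTotalDegree (Fin n) ℝ (d + 1)).subtype)
        (((U.comap (restrictTotalDegree (Fin n) ℝ (d + 1)).subtype).mkQ ∘ₗ
            Submodule.inclusion hAB) q) =
      L (X i * (p : MvPolynomial (Fin n) ℝ) * (q : MvPolynomial (Fin n) ℝ)))
    (hcomm : ∀ i j : Fin n, M i * M j = M j * M i) :
    ∃ a : Fin (Module.finrank ℝ
        ↥(LinearMap.range ((U.comap (restrictTotalDegree (Fin n) ℝ (d + 1)).subtype).mkQ ∘ₗ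
          Submodule.inclusion hAB))) → (Fin n → ℝ),
      Function.Injective a ∧
      ∃ lam : Fin (Module.finrank ℝ
          ↥(LinearMap.range ((U.comap (restrictTotalDegree (Fin n) ℝ (d + 1)).subtype).mkQ ∘ₗ
            Submodule.inclusion hAB))) → ℝ,
        (∀ j, 0 < lam j) ∧
        (∀ p q : MvPolynomial (Fin n) ℝ, p.totalDegree ≤ d + 1 →
          q ∈ restrictTotalDegree (Fin n) ℝ d ⊔ U →
          L (p * q) = ∑ j, lam j * (MvPolynomial.eval (a j) p * MvPolynomial.eval (a j) q)) ∧
        (∀ r : MvPolynomial (Fin n) ℝ, r.totalDegree ≤ 2 * d + 1 →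
          L r = ∑ j, lam j * MvPolynomial.eval (a j) r) := by
  exact aux_main L hL U hU
    (restrictTotalDegree (Fin n) ℝ d) (restrictTotalDegree (Fin n) ℝ (d + 1))
    (fun p => mem_restrictTotalDegree _ _ p) rfl (fun p => mem_restrictTotalDegree _ _ p)
    hAB
    ((U.comap (restrictTotalDegree (Fin n) ℝ (d + 1)).subtype).mkQ)
    (Submodule.mkQ_surjective _)
    (fun p => by rw [Submodule.mkQ_apply, Submodule.Quotient.mk_eq_zero]; exact Iff.rfl)
    β hβ
    ((U.comap (restrictTotalDegree (Fin n) ℝ (d + 1)).subtype).mkQ ∘ₗ Submodule.inclusion hAB)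
    rfl M hM hcomm
end

section
/- (Möller-type lower bound) Suppose L ∈ ℝ[X₁,…,Xₙ]_{2d+2}* is nonnegative on squares and has a quadrature rule on ℝ[X]_{2d+1} with N pairwise distinct nodes. Then N ≥ dim(T_L) + (1/2)·max_{1≤j,k≤n} rk[M_{L,j}, M_{L,k}], where [A,B] = AB − BA is the commutator of the truncated GNS multiplication operators. -/
open MvPolynomial

section Aux

open Module

private lemma moller_rank_sub_le {K V W : Type*} [Field K] [AddCommGroup V] [Module K V]
    [AddCommGroup W] [Module K W] [FiniteDimensional K W] (f g : V →ₗ[K] W) :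
    finrank K (LinearMap.range (f - g)) ≤
      finrank K (LinearMap.range f) + finrank K (LinearMap.range g) := by
  have h : LinearMap.range (f - g) ≤ LinearMap.range f ⊔ LinearMap.range g := by
    rintro _ ⟨x, rfl⟩
    exact Submodule.sub_mem _ (Submodule.mem_sup_left ⟨x, rfl⟩)
      (Submodule.mem_sup_right ⟨x, rfl⟩)
  calc finrank K (LinearMap.range (f - g)) ≤
      finrank K ↥(LinearMap.range f ⊔ LinearMap.range g) := Submodule.finrank_mono h
    _ ≤ _ := by
        have := Submodule.finrank_sup_add_finrank_inf_eq (LinearMap.range f) (LinearMap.range g)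
        omega

private lemma moller_rank_comp_le_left {K V W X : Type*} [Field K] [AddCommGroup V] [Module K V]
    [AddCommGroup W] [Module K W] [AddCommGroup X] [Module K X] [FiniteDimensional K W]
    (f : W →ₗ[K] X) (g : V →ₗ[K] W) :
    finrank K (LinearMap.range (f ∘ₗ g)) ≤ finrank K (LinearMap.range g) := by
  rw [LinearMap.range_comp]
  exact Submodule.finrank_map_le f _

private lemma moller_key_lemma {V : Type*} [AddCommGroup V] [Module ℝ V] {N : ℕ}
    (e : V →ₗ[ℝ] EuclideanSpace ℝ (Fin N)) (he : Function.Injective e)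
    (A B : Module.End ℝ V)
    (DA DB : EuclideanSpace ℝ (Fin N) →ₗ[ℝ] EuclideanSpace ℝ (Fin N))
    (hcomm : DA ∘ₗ DB = DB ∘ₗ DA)
    (hA : ∀ x : V, e (A x) =
      (Submodule.orthogonalProjection (LinearMap.range e) (DA (e x)) : EuclideanSpace ℝ (Fin N)))
    (hB : ∀ x : V, e (B x) =
      (Submodule.orthogonalProjection (LinearMap.range e) (DB (e x)) : EuclideanSpace ℝ (Fin N))) :
    2 * finrank ℝ V + finrank ℝ (LinearMap.range (A * B - B * A)) ≤ 2 * N := by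
  classical
  set W := LinearMap.range e with hW
  haveI : FiniteDimensional ℝ V :=
    FiniteDimensional.of_injective e he
  set P : EuclideanSpace ℝ (Fin N) →ₗ[ℝ] EuclideanSpace ℝ (Fin N) :=
    W.subtype ∘ₗ (Submodule.orthogonalProjection W : EuclideanSpace ℝ (Fin N) →L[ℝ] W).toLinearMap with hP
  set Q : EuclideanSpace ℝ (Fin N) →ₗ[ℝ] EuclideanSpace ℝ (Fin N) :=
    LinearMap.id - P with hQ
  have hQrange : LinearMap.range Q ≤ Wᗮ := by
    rintro _ ⟨v, rfl⟩
    exact Submodule.sub_starProjection_mem_orthogonal (K := W) v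
  have hQrank : finrank ℝ (LinearMap.range Q) ≤ N - finrank ℝ W := by
    have h1 : finrank ℝ (LinearMap.range Q) ≤ finrank ℝ Wᗮ := Submodule.finrank_mono hQrange
    have h2 : finrank ℝ W + finrank ℝ Wᗮ = finrank ℝ (EuclideanSpace ℝ (Fin N)) :=
      Submodule.finrank_add_finrank_orthogonal W
    rw [finrank_euclideanSpace_fin] at h2
    omega
  have heA : ∀ x : V, e (A x) = P (DA (e x)) := fun x => hA x
  have heB : ∀ x : V, e (B x) = P (DB (e x)) := fun x => hB x
  have hmain : (e ∘ₗ (A * B - B * A) : V →ₗ[ℝ] EuclideanSpace ℝ (Fin N)) =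
      (P ∘ₗ DB ∘ₗ Q ∘ₗ DA ∘ₗ e) - (P ∘ₗ DA ∘ₗ Q ∘ₗ DB ∘ₗ e) := by
    refine LinearMap.ext fun x => ?_
    have h1 : e ((A * B) x) = P (DA (P (DB (e x)))) := by
      rw [show (A * B) x = A (B x) from rfl, heA, heB]
    have h2 : e ((B * A) x) = P (DB (P (DA (e x)))) := by
      rw [show (B * A) x = B (A x) from rfl, heB, heA]
    have hc : DA (DB (e x)) = DB (DA (e x)) := by
      have := LinearMap.congr_fun hcomm (e x)
      simpa using this
    have hL : e ((A * B - B * A) x) = e ((A * B) x) - e ((B * A) x) := by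
      rw [LinearMap.sub_apply, map_sub]
    rw [LinearMap.comp_apply, hL, h1, h2]
    simp only [LinearMap.sub_apply, LinearMap.comp_apply, LinearMap.id_apply, hQ,
      map_sub]
    rw [hc]
    abel
  have hrank : finrank ℝ (LinearMap.range (A * B - B * A)) ≤ 2 * (N - finrank ℝ W) := by
    have hinjrange : finrank ℝ (LinearMap.range (A * B - B * A)) =
        finrank ℝ (LinearMap.range (e ∘ₗ (A * B - B * A))) := by
      rw [LinearMap.range_comp]
      exact (LinearEquiv.finrank_eq
        (Submodule.equivMapOfInjective e he (LinearMap.range (A * B - B * A))))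
    rw [hinjrange, hmain]
    have t1 : finrank ℝ (LinearMap.range (P ∘ₗ DA ∘ₗ Q ∘ₗ DB ∘ₗ e)) ≤ N - finrank ℝ W := by
      calc finrank ℝ (LinearMap.range (P ∘ₗ DA ∘ₗ Q ∘ₗ DB ∘ₗ e))
          ≤ finrank ℝ (LinearMap.range (Q ∘ₗ DB ∘ₗ e)) := by
            rw [show P ∘ₗ DA ∘ₗ Q ∘ₗ DB ∘ₗ e = (P ∘ₗ DA) ∘ₗ (Q ∘ₗ DB ∘ₗ e) by
              simp [LinearMap.comp_assoc]]
            exact moller_rank_comp_le_left _ _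
        _ ≤ finrank ℝ (LinearMap.range Q) :=
            Submodule.finrank_mono (LinearMap.range_comp_le_range _ _)
        _ ≤ N - finrank ℝ W := hQrank
    have t2 : finrank ℝ (LinearMap.range (P ∘ₗ DB ∘ₗ Q ∘ₗ DA ∘ₗ e)) ≤ N - finrank ℝ W := by
      calc finrank ℝ (LinearMap.range (P ∘ₗ DB ∘ₗ Q ∘ₗ DA ∘ₗ e))
          ≤ finrank ℝ (LinearMap.range (Q ∘ₗ DA ∘ₗ e)) := by
            rw [show P ∘ₗ DB ∘ₗ Q ∘ₗ DA ∘ₗ e = (P ∘ₗ DB) ∘ₗ (Q ∘ₗ DA ∘ₗ e) by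
              simp [LinearMap.comp_assoc]]
            exact moller_rank_comp_le_left _ _
        _ ≤ finrank ℝ (LinearMap.range Q) :=
            Submodule.finrank_mono (LinearMap.range_comp_le_range _ _)
        _ ≤ N - finrank ℝ W := hQrank
    calc finrank ℝ (LinearMap.range ((P ∘ₗ DB ∘ₗ Q ∘ₗ DA ∘ₗ e) - (P ∘ₗ DA ∘ₗ Q ∘ₗ DB ∘ₗ e)))
        ≤ _ + _ := moller_rank_sub_le _ _
      _ ≤ 2 * (N - finrank ℝ W) := by omega
  have hVW : finrank ℝ V = finrank ℝ W := (LinearEquiv.ofInjective e he).finrank_eq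
  have hWN : finrank ℝ W ≤ N := by
    have := W.finrank_le
    rwa [finrank_euclideanSpace_fin] at this
  omega

/-- The weighted evaluation map `p ↦ (√(λ i) * p(a i))ᵢ`. -/
private noncomputable def mollerEv {n d N : ℕ} (lam : Fin N → ℝ) (a : Fin N → Fin n → ℝ) :
    ↥(restrictTotalDegree (Fin n) ℝ d) →ₗ[ℝ] EuclideanSpace ℝ (Fin N) where
  toFun p := WithLp.toLp 2 (fun i => Real.sqrt (lam i) * eval (a i) (p : MvPolynomial (Fin n) ℝ))
  map_add' p q := PiLp.ext fun i => by
    show Real.sqrt (lam i) * eval (a i) ((p : MvPolynomial (Fin n) ℝ) + q) =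
      Real.sqrt (lam i) * eval (a i) (p : MvPolynomial (Fin n) ℝ) +
      Real.sqrt (lam i) * eval (a i) (q : MvPolynomial (Fin n) ℝ)
    rw [map_add, mul_add]
  map_smul' c p := PiLp.ext fun i => by
    show Real.sqrt (lam i) * eval (a i) (c • (p : MvPolynomial (Fin n) ℝ)) =
      c * (Real.sqrt (lam i) * eval (a i) (p : MvPolynomial (Fin n) ℝ))
    rw [smul_eval, mul_left_comm]

/-- The diagonal operator with entries `c i`. -/
private def mollerDiag {N : ℕ} (c : Fin N → ℝ) :
    EuclideanSpace ℝ (Fin N) →ₗ[ℝ] EuclideanSpace ℝ (Fin N) where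
  toFun v := WithLp.toLp 2 (fun i => c i * v i)
  map_add' v w := PiLp.ext fun i => show c i * (v i + w i) = c i * v i + c i * w i from mul_add _ _ _
  map_smul' r v := PiLp.ext fun i => show c i * (r * v i) = r * (c i * v i) from mul_left_comm _ _ _

end Aux

set_option maxHeartbeats 1000000 in
private lemma moller_aux {n d N : ℕ}
    (L : MvPolynomial (Fin n) ℝ →ₗ[ℝ] ℝ)
    (U : Submodule ℝ (MvPolynomial (Fin n) ℝ))
    (hU : ∀ p : MvPolynomial (Fin n) ℝ, p ∈ U ↔ (p.totalDegree ≤ d + 1 ∧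
      ∀ q : MvPolynomial (Fin n) ℝ, q.totalDegree ≤ d + 1 → L (p * q) = 0))
    (a : Fin N → (Fin n → ℝ)) (lam : Fin N → ℝ) (hlam : ∀ i, 0 < lam i)
    (hq : ∀ g : MvPolynomial (Fin n) ℝ, g.totalDegree ≤ 2 * d + 1 →
      L g = ∑ i, lam i * MvPolynomial.eval (a i) g)
    {T : Type*} [AddCommGroup T] [Module ℝ T]
    (π : ↥(restrictTotalDegree (Fin n) ℝ d) →ₗ[ℝ] T)
    (β : T → T → ℝ)
    (hz : ∀ p : ↥(restrictTotalDegree (Fin n) ℝ d),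
      π p = 0 ↔ ((p : MvPolynomial (Fin n) ℝ) ∈ U))
    (hβπ : ∀ p q : ↥(restrictTotalDegree (Fin n) ℝ d),
      β (π p) (π q) = L ((p : MvPolynomial (Fin n) ℝ) * (q : MvPolynomial (Fin n) ℝ)))
    (M : Fin n → Module.End ℝ ↥(LinearMap.range π))
    (hMπ : ∀ (i : Fin n) (p q : ↥(restrictTotalDegree (Fin n) ℝ d)),
      β ↑(M i ⟨π p, ⟨p, rfl⟩⟩) (π q) =
        L (X i * (p : MvPolynomial (Fin n) ℝ) * (q : MvPolynomial (Fin n) ℝ)))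
    (j k : Fin n) :
    2 * Module.finrank ℝ ↥(LinearMap.range π) +
      Module.finrank ℝ ↥(LinearMap.range (M j * M k - M k * M j)) ≤ 2 * N := by
  classical
  have hev_apply : ∀ (p : ↥(restrictTotalDegree (Fin n) ℝ d)) (i : Fin N),
      mollerEv (d := d) lam a p i =
        Real.sqrt (lam i) * eval (a i) (p : MvPolynomial (Fin n) ℝ) := fun _ _ => rfl
  have hdiag_apply : ∀ (c : Fin N → ℝ) (v : EuclideanSpace ℝ (Fin N)) (i : Fin N),
      mollerDiag c v i = c i * v i := fun _ _ _ => rfl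
  have hdeg0 : ∀ p : ↥(restrictTotalDegree (Fin n) ℝ d),
      (p : MvPolynomial (Fin n) ℝ).totalDegree ≤ d := fun p =>
    (mem_restrictTotalDegree _ _ _).1 p.2
  -- inner product identities
  have hip : ∀ p q : ↥(restrictTotalDegree (Fin n) ℝ d),
      (inner ℝ (mollerEv (d := d) lam a p) (mollerEv (d := d) lam a q) : ℝ) =
        L ((p : MvPolynomial (Fin n) ℝ) * (q : MvPolynomial (Fin n) ℝ)) := by
    intro p q
    have hdeg : ((p : MvPolynomial (Fin n) ℝ) * (q : MvPolynomial (Fin n) ℝ)).totalDegree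
        ≤ 2 * d + 1 := by
      refine le_trans (totalDegree_mul _ _) ?_
      have := hdeg0 p; have := hdeg0 q; omega
    rw [hq _ hdeg, PiLp.inner_apply]
    refine Finset.sum_congr rfl fun i _ => ?_
    simp only [RCLike.inner_apply, conj_trivial, map_mul, hev_apply]
    have h := Real.mul_self_sqrt (hlam i).le
    linear_combination (eval (a i) (p : MvPolynomial (Fin n) ℝ) *
      eval (a i) (q : MvPolynomial (Fin n) ℝ)) * h
  have hipX : ∀ (i : Fin n) (p q : ↥(restrictTotalDegree (Fin n) ℝ d)),
      (inner ℝ (mollerDiag (fun i' => a i' i) (mollerEv (d := d) lam a p))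
        (mollerEv (d := d) lam a q) : ℝ) =
        L (X i * (p : MvPolynomial (Fin n) ℝ) * (q : MvPolynomial (Fin n) ℝ)) := by
    intro i p q
    have hdeg : (X i * (p : MvPolynomial (Fin n) ℝ) *
        (q : MvPolynomial (Fin n) ℝ)).totalDegree ≤ 2 * d + 1 := by
      refine le_trans (totalDegree_mul _ _) ?_
      have h1 : (X i * (p : MvPolynomial (Fin n) ℝ)).totalDegree ≤ 1 + d := by
        refine le_trans (totalDegree_mul _ _) ?_
        have := hdeg0 p
        have hx : (X i : MvPolynomial (Fin n) ℝ).totalDegree = 1 := totalDegree_X i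
        omega
      have := hdeg0 q; omega
    rw [hq _ hdeg, PiLp.inner_apply]
    refine Finset.sum_congr rfl fun i' _ => ?_
    simp only [RCLike.inner_apply, conj_trivial, map_mul, hev_apply, hdiag_apply, eval_X]
    have h := Real.mul_self_sqrt (hlam i').le
    linear_combination (a i' i * eval (a i') (p : MvPolynomial (Fin n) ℝ) *
      eval (a i') (q : MvPolynomial (Fin n) ℝ)) * h
  -- kernel facts
  have hker1 : ∀ p : ↥(restrictTotalDegree (Fin n) ℝ d), π p = 0 →
      mollerEv (d := d) lam a p = 0 := by
    intro p hp
    have hpU := (hz p).1 hp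
    have h0 : L ((p : MvPolynomial (Fin n) ℝ) * (p : MvPolynomial (Fin n) ℝ)) = 0 :=
      ((hU _).1 hpU).2 _ (le_trans (hdeg0 p) (Nat.le_succ d))
    have : (inner ℝ (mollerEv (d := d) lam a p) (mollerEv (d := d) lam a p) : ℝ) = 0 := by
      rw [hip p p, h0]
    exact inner_self_eq_zero.1 this
  have hker2 : ∀ p : ↥(restrictTotalDegree (Fin n) ℝ d),
      mollerEv (d := d) lam a p = 0 → π p = 0 := by
    intro p hp
    have heval : ∀ i, eval (a i) (p : MvPolynomial (Fin n) ℝ) = 0 := by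
      intro i
      have h1 : Real.sqrt (lam i) * eval (a i) (p : MvPolynomial (Fin n) ℝ) = 0 := by
        rw [← hev_apply p i, hp]; rfl
      have hs : Real.sqrt (lam i) ≠ 0 := (Real.sqrt_pos.2 (hlam i)).ne'
      exact (mul_eq_zero.1 h1).resolve_left hs
    refine (hz p).2 ((hU _).2 ⟨le_trans (hdeg0 p) (Nat.le_succ d), fun q hqd => ?_⟩)
    have hdeg : ((p : MvPolynomial (Fin n) ℝ) * q).totalDegree ≤ 2 * d + 1 := by
      refine le_trans (totalDegree_mul _ _) ?_
      have := hdeg0 p; omega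
    rw [hq _ hdeg]
    refine Finset.sum_eq_zero fun i _ => ?_
    rw [map_mul, heval i]
    ring
  -- the embedding of the range of π
  have hle : LinearMap.ker π ≤ LinearMap.ker (mollerEv (d := d) lam a) := fun x hx =>
    LinearMap.mem_ker.2 (hker1 x (LinearMap.mem_ker.1 hx))
  set ebar : ↥(LinearMap.range π) →ₗ[ℝ] EuclideanSpace ℝ (Fin N) :=
    ((LinearMap.ker π).liftQ (mollerEv (d := d) lam a) hle) ∘ₗ
      π.quotKerEquivRange.symm.toLinearMap with hebardef
  have hebar : ∀ (x : ↥(LinearMap.range π)) (p : ↥(restrictTotalDegree (Fin n) ℝ d)),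
      π p = ↑x → ebar x = mollerEv (d := d) lam a p := by
    rintro ⟨x, hx⟩ p hp
    simp only at hp
    subst hp
    show ((LinearMap.ker π).liftQ (mollerEv (d := d) lam a) hle)
      (π.quotKerEquivRange.symm ⟨π p, hx⟩) = mollerEv (d := d) lam a p
    rw [π.quotKerEquivRange_symm_apply_image p hx]
    rfl
  have hinj : Function.Injective ebar := by
    rw [← LinearMap.ker_eq_bot]
    refine (Submodule.eq_bot_iff _).2 fun x hx => ?_
    obtain ⟨p, hp⟩ := x.2
    have h0 : mollerEv (d := d) lam a p = 0 := by
      rw [← hebar x p hp]; exact LinearMap.mem_ker.1 hx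
    have hπp : π p = 0 := hker2 p h0
    refine Subtype.ext ?_
    rw [← hp, hπp]
    rfl
  -- the projection identity
  have hMeq : ∀ (i : Fin n) (x : ↥(LinearMap.range π)),
      ebar (M i x) = (Submodule.orthogonalProjection (LinearMap.range ebar)
        (mollerDiag (fun i' => a i' i) (ebar x)) : EuclideanSpace ℝ (Fin N)) := by
    intro i x
    obtain ⟨p, hp⟩ := x.2
    obtain ⟨r, hr⟩ := (M i x).2
    rw [hebar (M i x) r hr, hebar x p hp]
    symm
    apply Submodule.eq_starProjection_of_mem_of_inner_eq_zero
    · exact LinearMap.mem_range.2 ⟨M i x, hebar (M i x) r hr⟩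
    · rintro w ⟨y, rfl⟩
      obtain ⟨s, hs⟩ := y.2
      rw [hebar y s hs, inner_sub_left, hipX i p s, hip r s]
      have h1 : β ↑(M i x) (π s) =
          L (X i * (p : MvPolynomial (Fin n) ℝ) * (s : MvPolynomial (Fin n) ℝ)) := by
        have hx : x = ⟨π p, ⟨p, rfl⟩⟩ := Subtype.ext hp.symm
        rw [hx]
        exact hMπ i p s
      have h2 : β ↑(M i x) (π s) =
          L ((r : MvPolynomial (Fin n) ℝ) * (s : MvPolynomial (Fin n) ℝ)) := by
        rw [← hr]; exact hβπ r s
      rw [← h1, h2, sub_self]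
  exact moller_key_lemma ebar hinj (M j) (M k)
    (mollerDiag (fun i' => a i' j)) (mollerDiag (fun i' => a i' k))
    (LinearMap.ext fun v => PiLp.ext fun i => show a i j * (a i k * v i) = a i k * (a i j * v i) from mul_left_comm _ _ _)
    (hMeq j) (hMeq k)

/-- Möller-type lower bound: if `L ∈ ℝ[X]_{2d+2}*` is nonnegative on squares and has a
quadrature rule on `ℝ[X]_{2d+1}` with `N` pairwise distinct nodes, then
`N ≥ dim T_L + (1/2)·rk[M_{L,j}, M_{L,k}]` for all `j, k`, i.e.
`2N ≥ 2·dim T_L + rk[M_{L,j}, M_{L,k}]`, where `M_{L,i}` are the truncated GNS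
multiplication operators on `T_L`. -/
theorem moller_lower_bound {n d N : ℕ}
    (L : MvPolynomial (Fin n) ℝ →ₗ[ℝ] ℝ)
    (hL : ∀ p : MvPolynomial (Fin n) ℝ, p.totalDegree ≤ d + 1 → 0 ≤ L (p ^ 2))
    (U : Submodule ℝ (MvPolynomial (Fin n) ℝ))
    (hU : ∀ p : MvPolynomial (Fin n) ℝ, p ∈ U ↔ (p.totalDegree ≤ d + 1 ∧
      ∀ q : MvPolynomial (Fin n) ℝ, q.totalDegree ≤ d + 1 → L (p * q) = 0))
    (hAB : restrictTotalDegree (Fin n) ℝ d ≤ restrictTotalDegree (Fin n) ℝ (d + 1))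
    (β : (↥(restrictTotalDegree (Fin n) ℝ (d + 1)) ⧸
        U.comap (restrictTotalDegree (Fin n) ℝ (d + 1)).subtype) →
      (↥(restrictTotalDegree (Fin n) ℝ (d + 1)) ⧸
        U.comap (restrictTotalDegree (Fin n) ℝ (d + 1)).subtype) → ℝ)
    (hβ : ∀ p q : ↥(restrictTotalDegree (Fin n) ℝ (d + 1)),
      β ((U.comap (restrictTotalDegree (Fin n) ℝ (d + 1)).subtype).mkQ p)
        ((U.comap (restrictTotalDegree (Fin n) ℝ (d + 1)).subtype).mkQ q) =
      L ((p : MvPolynomial (Fin n) ℝ) * (q : MvPolynomial (Fin n) ℝ)))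
    (M : Fin n → Module.End ℝ
      ↥(LinearMap.range ((U.comap (restrictTotalDegree (Fin n) ℝ (d + 1)).subtype).mkQ ∘ₗ
        Submodule.inclusion hAB)))
    (hM : ∀ (i : Fin n) (p q : ↥(restrictTotalDegree (Fin n) ℝ d)),
      β (M i ⟨((U.comap (restrictTotalDegree (Fin n) ℝ (d + 1)).subtype).mkQ ∘ₗ
            Submodule.inclusion hAB) p, ⟨p, rfl⟩⟩ :
          ↥(restrictTotalDegree (Fin n) ℝ (d + 1)) ⧸
            U.comap (restrictTotalDegree (Fin n) ℝ (d + 1)).subtype)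
        (((U.comap (restrictTotalDegree (Fin n) ℝ (d + 1)).subtype).mkQ ∘ₗ
            Submodule.inclusion hAB) q) =
      L (X i * (p : MvPolynomial (Fin n) ℝ) * (q : MvPolynomial (Fin n) ℝ)))
    (a : Fin N → (Fin n → ℝ)) (ha : Function.Injective a)
    (lam : Fin N → ℝ) (hlam : ∀ i, 0 < lam i)
    (hq : ∀ g : MvPolynomial (Fin n) ℝ, g.totalDegree ≤ 2 * d + 1 →
      L g = ∑ i, lam i * MvPolynomial.eval (a i) g) :
    ∀ j k : Fin n,
      2 * Module.finrank ℝ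
          ↥(LinearMap.range ((U.comap (restrictTotalDegree (Fin n) ℝ (d + 1)).subtype).mkQ ∘ₗ
            Submodule.inclusion hAB)) +
        Module.finrank ℝ ↥(LinearMap.range (M j * M k - M k * M j)) ≤ 2 * N := by
  intro j k
  refine moller_aux L U hU a lam hlam hq
    ((U.comap (restrictTotalDegree (Fin n) ℝ (d + 1)).subtype).mkQ ∘ₗ
      Submodule.inclusion hAB) β ?_ ?_ M hM j k
  · intro p
    simp only [LinearMap.comp_apply, Submodule.mkQ_apply, Submodule.Quotient.mk_eq_zero,
      Submodule.mem_comap, Submodule.subtype_apply, Submodule.coe_inclusion]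
  · intro p q
    have := hβ (Submodule.inclusion hAB p) (Submodule.inclusion hAB q)
    simpa [Submodule.coe_inclusion] using this
end
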